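/- arXiv:1901.01518 — 4 statements merged into one kernel-verified Lean document; each statement's English description precedes it below -/
import Mathlib

section
/- Let N ≥ 3 and b > 2 with N > b. Define V(x) = 1/(1+|x|^b) on ℝ^N. Then there exist constants c, C > 0 such that for all |x| > 1, c·|x|^{1-b} ≤ I₁V(x) ≤ C·|x|^{1-b}. -/
open MeasureTheory Real Metric ENNReal Set

private lemma aux_real_pow (s : ℝ) (hs : 0 < s) (p q : ℝ) (k : ℕ) :
    (s * (2:ℝ)⁻¹ ^ (k+1)) ^ p * (s * (2:ℝ)⁻¹ ^ k) ^ q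
      = (2:ℝ)⁻¹ ^ p * s ^ (q + p) * (((2:ℝ)⁻¹ ^ (q + p)) ^ k) := by
  have hc : (0:ℝ) < 2⁻¹ := by norm_num
  have h1 : ((2:ℝ)⁻¹ ^ (k+1) : ℝ) ^ p = (2:ℝ)⁻¹ ^ (((k:ℝ)+1) * p) := by
    rw [← Real.rpow_natCast (2:ℝ)⁻¹ (k+1), ← Real.rpow_mul hc.le]
    push_cast
    ring_nf
  have h2 : ((2:ℝ)⁻¹ ^ k : ℝ) ^ q = (2:ℝ)⁻¹ ^ ((k:ℝ) * q) := by
    rw [← Real.rpow_natCast (2:ℝ)⁻¹ k, ← Real.rpow_mul hc.le]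
  have h3 : (((2:ℝ)⁻¹ ^ (q + p)) ^ k : ℝ) = (2:ℝ)⁻¹ ^ ((q + p) * (k:ℝ)) := by
    rw [← Real.rpow_natCast ((2:ℝ)⁻¹ ^ (q+p)) k, ← Real.rpow_mul hc.le]
  rw [Real.mul_rpow hs.le (by positivity), Real.mul_rpow hs.le (by positivity), h1, h2, h3]
  rw [Real.rpow_add hs q p]
  rw [show s ^ p * (2:ℝ)⁻¹ ^ (((k:ℝ) + 1) * p) * (s ^ q * (2:ℝ)⁻¹ ^ ((k:ℝ) * q))
      = s ^ q * s ^ p * ((2:ℝ)⁻¹ ^ (((k:ℝ) + 1) * p) * (2:ℝ)⁻¹ ^ ((k:ℝ) * q)) from by ring,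
    show (2:ℝ)⁻¹ ^ p * (s ^ q * s ^ p) * (2:ℝ)⁻¹ ^ ((q + p) * (k:ℝ))
      = s ^ q * s ^ p * ((2:ℝ)⁻¹ ^ p * (2:ℝ)⁻¹ ^ ((q + p) * (k:ℝ))) from by ring,
    ← Real.rpow_add hc, ← Real.rpow_add hc]
  congr 1
  ring

private lemma aux_ball (N : ℕ) (hN : 1 ≤ N) {p : ℝ} (hp0 : p < 0) (hpN : -(N:ℝ) < p) :
    ∃ C : ℝ≥0∞, C ≠ ∞ ∧ ∀ s : ℝ, 0 < s →
      ∫⁻ y in Metric.ball (0 : EuclideanSpace ℝ (Fin N)) s, ENNReal.ofReal (‖y‖ ^ p) ≤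
        C * ENNReal.ofReal (s ^ ((N:ℝ) + p)) := by
  haveI : NeZero N := ⟨by omega⟩
  set E := EuclideanSpace ℝ (Fin N) with hE
  haveI : Nontrivial E := by
    refine nontrivial_of_ne (EuclideanSpace.single ⟨0, by omega⟩ 1) 0 ?_
    intro h
    have : (EuclideanSpace.single ⟨0, by omega⟩ (1:ℝ) : E) ⟨0, by omega⟩ = (0 : E) ⟨0, by omega⟩ := by rw [h]
    rw [EuclideanSpace.single_apply] at this
    exact one_ne_zero this
  have hfr : Module.finrank ℝ E = N := finrank_euclideanSpace_fin
  set μB := volume (Metric.ball (0:E) 1) with hμB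
  have hμBfin : μB ≠ ∞ := measure_ball_lt_top.ne
  set ρ : ℝ≥0∞ := ENNReal.ofReal ((2:ℝ)⁻¹ ^ ((N:ℝ) + p)) with hρ
  have hρ1 : ρ < 1 := by
    rw [hρ, ENNReal.ofReal_lt_one]
    exact Real.rpow_lt_one (by norm_num) (by norm_num) (by linarith)
  refine ⟨ENNReal.ofReal ((2:ℝ)⁻¹ ^ p) * μB * (1 - ρ)⁻¹, ?_, ?_⟩
  · refine ENNReal.mul_ne_top (ENNReal.mul_ne_top ENNReal.ofReal_ne_top hμBfin)
      (ENNReal.inv_ne_top.2 ?_)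
    simp only [ne_eq, tsub_eq_zero_iff_le, not_le]
    exact hρ1
  intro s hs
  set A : ℕ → Set E := fun k =>
    {y : E | s * (2:ℝ)⁻¹ ^ (k+1) ≤ ‖y‖} ∩ Metric.ball 0 (s * (2:ℝ)⁻¹ ^ k) with hA
  have hcover : Metric.ball (0:E) s ⊆ {0} ∪ ⋃ k, A k := by
    intro y hy
    rcases eq_or_ne y 0 with rfl | hy0
    · exact Or.inl rfl
    right
    have hy0' : 0 < ‖y‖ := norm_pos_iff.2 hy0
    have hyb : ‖y‖ < s := by simpa [mem_ball_zero_iff] using hy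
    have hex : ∃ k : ℕ, s * (2:ℝ)⁻¹ ^ (k+1) ≤ ‖y‖ := by
      obtain ⟨n, hn⟩ := exists_pow_lt_of_lt_one (div_pos hy0' hs)
        (by norm_num : (2:ℝ)⁻¹ < 1)
      refine ⟨n, ?_⟩
      have h1 : (2:ℝ)⁻¹ ^ (n+1) ≤ (2:ℝ)⁻¹ ^ n :=
        pow_le_pow_of_le_one (by norm_num) (by norm_num) (Nat.le_succ n)
      have h2 : (2:ℝ)⁻¹ ^ n * s < ‖y‖ := (lt_div_iff₀ hs).1 hn
      nlinarith
    set k₀ := Nat.find hex with hk₀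
    refine Set.mem_iUnion.2 ⟨k₀, Nat.find_spec hex, ?_⟩
    rw [mem_ball_zero_iff]
    rcases Nat.eq_zero_or_pos k₀ with h0 | hpos
    · rw [h0]; simpa using hyb
    · have hm : ¬ (s * (2:ℝ)⁻¹ ^ ((k₀ - 1) + 1) ≤ ‖y‖) := Nat.find_min hex (by omega)
      push_neg at hm
      have : (k₀ - 1) + 1 = k₀ := by omega
      rwa [this] at hm
  have hAmeas : ∀ k, MeasurableSet (A k) := fun k =>
    (measurableSet_le measurable_const measurable_norm).inter measurableSet_ball
  calc ∫⁻ y in Metric.ball (0:E) s, ENNReal.ofReal (‖y‖^p)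
      ≤ ∫⁻ y in ({0} ∪ ⋃ k, A k : Set E), ENNReal.ofReal (‖y‖^p) :=
        lintegral_mono_set hcover
    _ ≤ (∫⁻ y in ({0}: Set E), ENNReal.ofReal (‖y‖^p))
        + ∫⁻ y in (⋃ k, A k), ENNReal.ofReal (‖y‖^p) := lintegral_union_le _ _ _
    _ ≤ 0 + ∑' k, ∫⁻ y in A k, ENNReal.ofReal (‖y‖^p) := by
        gcongr
        · exact le_of_eq (setLIntegral_measure_zero _ _ (measure_singleton 0))
        · exact lintegral_iUnion_le _ _
    _ ≤ 0 + ∑' k, (ENNReal.ofReal ((2:ℝ)⁻¹ ^ p) * μB * ENNReal.ofReal (s ^ ((N:ℝ)+p))) * ρ ^ k := by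
        gcongr with k
        have hr1 : (0:ℝ) < s * (2:ℝ)⁻¹ ^ (k+1) := by positivity
        calc ∫⁻ y in A k, ENNReal.ofReal (‖y‖^p)
            ≤ ∫⁻ _ in A k, ENNReal.ofReal ((s * (2:ℝ)⁻¹ ^ (k+1)) ^ p) :=
              setLIntegral_mono' (hAmeas k) (fun y hy =>
                ENNReal.ofReal_le_ofReal (Real.rpow_le_rpow_of_nonpos hr1 hy.1 hp0.le))
          _ = ENNReal.ofReal ((s * (2:ℝ)⁻¹ ^ (k+1)) ^ p) * volume (A k) := setLIntegral_const _ _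
          _ ≤ ENNReal.ofReal ((s * (2:ℝ)⁻¹ ^ (k+1)) ^ p)
              * volume (Metric.ball (0:E) (s * (2:ℝ)⁻¹ ^ k)) := by
              gcongr
              exact Set.inter_subset_right
          _ = ENNReal.ofReal ((s * (2:ℝ)⁻¹ ^ (k+1)) ^ p)
              * (ENNReal.ofReal ((s * (2:ℝ)⁻¹ ^ k) ^ (N:ℝ)) * μB) := by
              rw [Measure.addHaar_ball _ _ (by positivity)]
              congr 2
              rw [← Real.rpow_natCast (s * (2:ℝ)⁻¹ ^ k) (Module.finrank ℝ E), hfr]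
          _ = ENNReal.ofReal ((s * (2:ℝ)⁻¹ ^ (k+1)) ^ p * (s * (2:ℝ)⁻¹ ^ k) ^ ((N:ℝ))) * μB := by
              rw [ENNReal.ofReal_mul (by positivity)]
              ring
          _ = ENNReal.ofReal ((2:ℝ)⁻¹ ^ p * s ^ ((N:ℝ) + p) * (((2:ℝ)⁻¹ ^ ((N:ℝ) + p)) ^ k)) * μB := by
              rw [aux_real_pow s hs p ((N:ℝ))]
          _ = (ENNReal.ofReal ((2:ℝ)⁻¹ ^ p) * μB * ENNReal.ofReal (s ^ ((N:ℝ)+p))) * ρ ^ k := by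
              rw [ENNReal.ofReal_mul (by positivity), ENNReal.ofReal_mul (by positivity),
                ← ENNReal.ofReal_pow (by positivity)]
              ring
    _ = (ENNReal.ofReal ((2:ℝ)⁻¹ ^ p) * μB * (1-ρ)⁻¹) * ENNReal.ofReal (s ^ ((N:ℝ)+p)) := by
        rw [zero_add, ENNReal.tsum_mul_left, ENNReal.tsum_geometric]
        ring

private lemma aux_real_pow2 (s : ℝ) (hs : 0 < s) (p q : ℝ) (k : ℕ) :
    (s * (2:ℝ) ^ k) ^ p * (s * (2:ℝ) ^ (k+1)) ^ q
      = (2:ℝ) ^ q * s ^ (q + p) * (((2:ℝ) ^ (q + p)) ^ k) := by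
  have hc : (0:ℝ) < 2 := by norm_num
  have h1 : ((2:ℝ) ^ k : ℝ) ^ p = (2:ℝ) ^ ((k:ℝ) * p) := by
    rw [← Real.rpow_natCast (2:ℝ) k, ← Real.rpow_mul hc.le]
  have h2 : ((2:ℝ) ^ (k+1) : ℝ) ^ q = (2:ℝ) ^ (((k:ℝ)+1) * q) := by
    rw [← Real.rpow_natCast (2:ℝ) (k+1), ← Real.rpow_mul hc.le]
    push_cast
    ring_nf
  have h3 : (((2:ℝ) ^ (q + p)) ^ k : ℝ) = (2:ℝ) ^ ((q + p) * (k:ℝ)) := by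
    rw [← Real.rpow_natCast ((2:ℝ) ^ (q+p)) k, ← Real.rpow_mul hc.le]
  rw [Real.mul_rpow hs.le (by positivity), Real.mul_rpow hs.le (by positivity), h1, h2, h3]
  rw [Real.rpow_add hs q p]
  rw [show s ^ p * (2:ℝ) ^ ((k:ℝ) * p) * (s ^ q * (2:ℝ) ^ (((k:ℝ)+1) * q))
      = s ^ q * s ^ p * ((2:ℝ) ^ ((k:ℝ) * p) * (2:ℝ) ^ (((k:ℝ)+1) * q)) from by ring,
    show (2:ℝ) ^ q * (s ^ q * s ^ p) * (2:ℝ) ^ ((q + p) * (k:ℝ))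
      = s ^ q * s ^ p * ((2:ℝ) ^ q * (2:ℝ) ^ ((q + p) * (k:ℝ))) from by ring,
    ← Real.rpow_add hc, ← Real.rpow_add hc]
  congr 1
  ring

private lemma aux_compl (N : ℕ) (hN : 1 ≤ N) {p : ℝ} (hpN : p < -(N:ℝ)) :
    ∃ C : ℝ≥0∞, C ≠ ∞ ∧ ∀ s : ℝ, 0 < s →
      ∫⁻ y in (Metric.ball (0 : EuclideanSpace ℝ (Fin N)) s)ᶜ, ENNReal.ofReal (‖y‖ ^ p) ≤
        C * ENNReal.ofReal (s ^ ((N:ℝ) + p)) := by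
  haveI : NeZero N := ⟨by omega⟩
  set E := EuclideanSpace ℝ (Fin N) with hE
  haveI : Nontrivial E := by
    refine nontrivial_of_ne (EuclideanSpace.single ⟨0, by omega⟩ 1) 0 ?_
    intro h
    have : (EuclideanSpace.single ⟨0, by omega⟩ (1:ℝ) : E) ⟨0, by omega⟩ = (0 : E) ⟨0, by omega⟩ := by rw [h]
    rw [EuclideanSpace.single_apply] at this
    exact one_ne_zero this
  have hfr : Module.finrank ℝ E = N := finrank_euclideanSpace_fin
  set μB := volume (Metric.ball (0:E) 1) with hμB
  have hμBfin : μB ≠ ∞ := measure_ball_lt_top.ne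
  have hp0 : p < 0 := by
    have : (0:ℝ) ≤ N := Nat.cast_nonneg N
    linarith
  set ρ : ℝ≥0∞ := ENNReal.ofReal ((2:ℝ) ^ ((N:ℝ) + p)) with hρ
  have hρ1 : ρ < 1 := by
    rw [hρ, ENNReal.ofReal_lt_one]
    exact Real.rpow_lt_one_of_one_lt_of_neg (by norm_num) (by linarith)
  refine ⟨ENNReal.ofReal ((2:ℝ) ^ ((N:ℝ))) * μB * (1 - ρ)⁻¹, ?_, ?_⟩
  · refine ENNReal.mul_ne_top (ENNReal.mul_ne_top ENNReal.ofReal_ne_top hμBfin)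
      (ENNReal.inv_ne_top.2 ?_)
    simp only [ne_eq, tsub_eq_zero_iff_le, not_le]
    exact hρ1
  intro s hs
  set A : ℕ → Set E := fun k =>
    {y : E | s * (2:ℝ) ^ k ≤ ‖y‖} ∩ Metric.ball 0 (s * (2:ℝ) ^ (k+1)) with hA
  have hcover : (Metric.ball (0:E) s)ᶜ ⊆ ⋃ k, A k := by
    intro y hy
    have hys : s ≤ ‖y‖ := by
      rw [Set.mem_compl_iff, mem_ball_zero_iff, not_lt] at hy
      exact hy
    have hex : ∃ k : ℕ, ‖y‖ < s * (2:ℝ) ^ (k+1) := by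
      obtain ⟨n, hn⟩ := pow_unbounded_of_one_lt (‖y‖ / s) (by norm_num : (1:ℝ) < 2)
      refine ⟨n, ?_⟩
      have h2 : ‖y‖ < s * (2:ℝ) ^ n := by
        rw [div_lt_iff₀ hs] at hn
        linarith [hn]
      have h3 : s * (2:ℝ) ^ n ≤ s * (2:ℝ) ^ (n+1) := by
        have : (2:ℝ) ^ n ≤ (2:ℝ) ^ (n+1) :=
          pow_le_pow_right₀ (by norm_num) (Nat.le_succ n)
        nlinarith
      linarith
    set k₀ := Nat.find hex with hk₀
    refine Set.mem_iUnion.2 ⟨k₀, ?_, mem_ball_zero_iff.2 (Nat.find_spec hex)⟩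
    rcases Nat.eq_zero_or_pos k₀ with h0 | hpos
    · rw [h0]
      simpa using hys
    · have hm : ¬ (‖y‖ < s * (2:ℝ) ^ ((k₀ - 1) + 1)) := Nat.find_min hex (by omega)
      push_neg at hm
      have : (k₀ - 1) + 1 = k₀ := by omega
      rw [this] at hm
      exact hm
  have hAmeas : ∀ k, MeasurableSet (A k) := fun k =>
    (measurableSet_le measurable_const measurable_norm).inter measurableSet_ball
  calc ∫⁻ y in (Metric.ball (0:E) s)ᶜ, ENNReal.ofReal (‖y‖^p)
      ≤ ∫⁻ y in (⋃ k, A k), ENNReal.ofReal (‖y‖^p) := lintegral_mono_set hcover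
    _ ≤ ∑' k, ∫⁻ y in A k, ENNReal.ofReal (‖y‖^p) := lintegral_iUnion_le _ _
    _ ≤ ∑' k, (ENNReal.ofReal ((2:ℝ) ^ ((N:ℝ))) * μB * ENNReal.ofReal (s ^ ((N:ℝ)+p))) * ρ ^ k := by
        gcongr with k
        have hr1 : (0:ℝ) < s * (2:ℝ) ^ k := by positivity
        calc ∫⁻ y in A k, ENNReal.ofReal (‖y‖^p)
            ≤ ∫⁻ _ in A k, ENNReal.ofReal ((s * (2:ℝ) ^ k) ^ p) :=
              setLIntegral_mono' (hAmeas k) (fun y hy =>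
                ENNReal.ofReal_le_ofReal (Real.rpow_le_rpow_of_nonpos hr1 hy.1 hp0.le))
          _ = ENNReal.ofReal ((s * (2:ℝ) ^ k) ^ p) * volume (A k) := setLIntegral_const _ _
          _ ≤ ENNReal.ofReal ((s * (2:ℝ) ^ k) ^ p)
              * volume (Metric.ball (0:E) (s * (2:ℝ) ^ (k+1))) := by
              gcongr
              exact Set.inter_subset_right
          _ = ENNReal.ofReal ((s * (2:ℝ) ^ k) ^ p)
              * (ENNReal.ofReal ((s * (2:ℝ) ^ (k+1)) ^ ((N:ℝ))) * μB) := by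
              rw [Measure.addHaar_ball _ _ (by positivity)]
              congr 2
              rw [← Real.rpow_natCast (s * (2:ℝ) ^ (k+1)) (Module.finrank ℝ E), hfr]
          _ = ENNReal.ofReal ((s * (2:ℝ) ^ k) ^ p * (s * (2:ℝ) ^ (k+1)) ^ ((N:ℝ))) * μB := by
              rw [ENNReal.ofReal_mul (by positivity)]
              ring
          _ = ENNReal.ofReal ((2:ℝ) ^ ((N:ℝ)) * s ^ ((N:ℝ) + p) * (((2:ℝ) ^ ((N:ℝ) + p)) ^ k)) * μB := by
              rw [aux_real_pow2 s hs p ((N:ℝ))]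
          _ = (ENNReal.ofReal ((2:ℝ) ^ ((N:ℝ))) * μB * ENNReal.ofReal (s ^ ((N:ℝ)+p))) * ρ ^ k := by
              rw [ENNReal.ofReal_mul (by positivity), ENNReal.ofReal_mul (by positivity),
                ← ENNReal.ofReal_pow (by positivity)]
              ring
    _ = (ENNReal.ofReal ((2:ℝ) ^ ((N:ℝ))) * μB * (1-ρ)⁻¹) * ENNReal.ofReal (s ^ ((N:ℝ)+p)) := by
        rw [ENNReal.tsum_mul_left, ENNReal.tsum_geometric]
        ring

private lemma half_rpow {R : ℝ} (hR : 0 ≤ R) (e : ℝ) : (R/2) ^ e = 2^(-e) * R ^ e := by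
  rw [div_eq_mul_inv, Real.mul_rpow hR (by norm_num), Real.inv_rpow (by norm_num),
    ← Real.rpow_neg (by norm_num)]
  ring

private lemma aux_div_le {V w c t d : ℝ} (hV : 0 ≤ V) (hVw : V ≤ w) (hc : 0 < c)
    (hct : c ≤ t) (hd : 0 ≤ d) : V / t ^ d ≤ w * c ^ (-d) := by
  have h1 : (0:ℝ) < c ^ d := Real.rpow_pos_of_pos hc d
  have h2 : c ^ d ≤ t ^ d := Real.rpow_le_rpow hc.le hct hd
  rw [Real.rpow_neg hc.le, ← div_eq_mul_inv]
  exact div_le_div₀ (hV.trans hVw) hVw h1 h2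

private lemma aux_num_le {V w t d : ℝ} (hV : 0 ≤ V) (hVw : V ≤ w) (hw : 0 ≤ w) (ht : 0 ≤ t)
    (hd : 0 < d) : V / t ^ d ≤ w * t ^ (-d) := by
  rcases eq_or_lt_of_le ht with h0 | h0
  · subst h0
    rw [Real.zero_rpow hd.ne', Real.zero_rpow (neg_ne_zero.2 hd.ne')]
    simp
  · have h1 : (0:ℝ) < t ^ d := Real.rpow_pos_of_pos h0 d
    rw [Real.rpow_neg h0.le, ← div_eq_mul_inv]
    exact div_le_div₀ hw hVw h1 le_rfl


private lemma aux_translate (N : ℕ) (x : EuclideanSpace ℝ (Fin N)) (r : ℝ) (p : ℝ) :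
    ∫⁻ y in Metric.ball x r, ENNReal.ofReal (‖x - y‖ ^ p)
      = ∫⁻ y in Metric.ball (0 : EuclideanSpace ℝ (Fin N)) r, ENNReal.ofReal (‖y‖ ^ p) := by
  have h := MeasureTheory.Measure.measurePreserving_sub_left (volume : Measure (EuclideanSpace ℝ (Fin N))) x
  have he : MeasurableEmbedding (fun y : EuclideanSpace ℝ (Fin N) => x - y) :=
    (MeasurableEquiv.subLeft x).measurableEmbedding
  have hpre : (fun y : EuclideanSpace ℝ (Fin N) => x - y) ⁻¹' (Metric.ball 0 r)
      = Metric.ball x r := by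
    ext y
    simp [Metric.mem_ball, dist_eq_norm, norm_sub_rev]
  rw [← hpre, h.setLIntegral_comp_preimage_emb he (fun z => ENNReal.ofReal (‖z‖ ^ p))]

set_option maxHeartbeats 1000000 in
/-- For `N ≥ 3`, `2 < b < N`, `V x = 1/(1+|x|^b)`, one has
`I₁V(x) ≍ |x|^(1-b)` for `|x| > 1`. -/
theorem stmt1 (N : ℕ) (hN : 3 ≤ N) (b : ℝ) (hb : 2 < b) (hbN : b < N) :
    ∃ c C : ℝ, 0 < c ∧ 0 < C ∧
      ∀ x : EuclideanSpace ℝ (Fin N), 1 < ‖x‖ →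
        c * ‖x‖ ^ (1 - b) ≤
          (Real.Gamma (((N : ℝ) - 1) / 2) /
              (π ^ ((N : ℝ) / 2) * 2 * Real.Gamma (1 / 2))) *
            ∫ y : EuclideanSpace ℝ (Fin N),
              (1 / (1 + ‖y‖ ^ b)) / ‖x - y‖ ^ ((N : ℝ) - 1) ∧
        (Real.Gamma (((N : ℝ) - 1) / 2) /
              (π ^ ((N : ℝ) / 2) * 2 * Real.Gamma (1 / 2))) *
            ∫ y : EuclideanSpace ℝ (Fin N),
              (1 / (1 + ‖y‖ ^ b)) / ‖x - y‖ ^ ((N : ℝ) - 1) ≤ C * ‖x‖ ^ (1 - b) := by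
  haveI : NeZero N := ⟨by omega⟩
  have hNr : (3:ℝ) ≤ (N:ℝ) := by exact_mod_cast hN
  have hbN' : b < (N:ℝ) := hbN
  have hfr : Module.finrank ℝ (EuclideanSpace ℝ (Fin N)) = N := finrank_euclideanSpace_fin
  set d : ℝ := (N:ℝ) - 1 with hdd
  have hd2 : 2 ≤ d := by rw [hdd]; linarith
  have hd0 : (0:ℝ) < d := by linarith
  obtain ⟨C1, hC1t, hC1⟩ := aux_ball N (by omega) (p := -b) (by linarith) (by linarith)
  obtain ⟨C2, hC2t, hC2⟩ := aux_ball N (by omega) (p := -d) (by linarith) (by rw [hdd]; linarith)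
  obtain ⟨C3, hC3t, hC3⟩ := aux_compl N (by omega) (p := -b + -d) (by rw [hdd]; linarith)
  set μB := volume (Metric.ball (0 : EuclideanSpace ℝ (Fin N)) 1) with hμB
  have hμB0 : μB ≠ 0 := (measure_ball_pos _ _ one_pos).ne'
  have hμBt : μB ≠ ∞ := measure_ball_lt_top.ne
  set D : ℝ≥0∞ := C1 * .ofReal (2^(b-1)) + C2 * .ofReal (2^(b-1))
      + .ofReal (2^(2*(N:ℝ)+b-1)) * μB + .ofReal (2^d) * C3 * .ofReal (2^(1-b)) with hD
  have hDt : D ≠ ∞ := by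
    rw [hD]
    refine ENNReal.add_ne_top.2 ⟨ENNReal.add_ne_top.2 ⟨ENNReal.add_ne_top.2 ⟨?_, ?_⟩, ?_⟩, ?_⟩
    · exact ENNReal.mul_ne_top hC1t ENNReal.ofReal_ne_top
    · exact ENNReal.mul_ne_top hC2t ENNReal.ofReal_ne_top
    · exact ENNReal.mul_ne_top ENNReal.ofReal_ne_top hμBt
    · exact ENNReal.mul_ne_top (ENNReal.mul_ne_top ENNReal.ofReal_ne_top hC3t)
        ENNReal.ofReal_ne_top
  set c4 : ℝ := (2*(3/2:ℝ)^b)⁻¹ * 2^d * ((2:ℝ)⁻¹^(N:ℕ) - (4:ℝ)⁻¹^(N:ℕ)) with hc4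
  have hc40 : 0 < c4 := by
    have h1 : (0:ℝ) < (2*(3/2:ℝ)^b)⁻¹ := by positivity
    have h2 : (0:ℝ) < (2:ℝ)^d := by positivity
    have h3 : (4:ℝ)⁻¹^(N:ℕ) < (2:ℝ)⁻¹^(N:ℕ) :=
      pow_lt_pow_left₀ (by norm_num) (by norm_num) (by omega)
    exact mul_pos (mul_pos h1 h2) (sub_pos.2 h3)
  have hcN0 : 0 < Real.Gamma (d / 2) / (π ^ ((N : ℝ) / 2) * 2 * Real.Gamma (1 / 2)) := by
    have hg1 : 0 < Real.Gamma (d / 2) := Real.Gamma_pos_of_pos (by linarith)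
    have hg2 : 0 < Real.Gamma (1/2 : ℝ) := Real.Gamma_pos_of_pos (by norm_num)
    have hπ : 0 < π ^ ((N:ℝ)/2) := Real.rpow_pos_of_pos Real.pi_pos _
    positivity
  set cN : ℝ := Real.Gamma (d / 2) / (π ^ ((N : ℝ) / 2) * 2 * Real.Gamma (1 / 2)) with hcN
  refine ⟨cN * (c4 * μB.toReal), cN * (D.toReal + 1), ?_, ?_, ?_⟩
  · have : 0 < μB.toReal := ENNReal.toReal_pos hμB0 hμBt
    positivity
  · have h1 : (0:ℝ) ≤ D.toReal := ENNReal.toReal_nonneg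
    have : (0:ℝ) < D.toReal + 1 := by linarith
    positivity
  intro x hx
  set R := ‖x‖ with hRdef
  have hR1 : 1 < R := hx
  have hR0 : (0:ℝ) < R := by linarith
  have hR2 : (0:ℝ) < R/2 := by linarith
  set g : EuclideanSpace ℝ (Fin N) → ℝ := fun y => (1 / (1 + ‖y‖ ^ b)) / ‖x - y‖ ^ d with hg
  have hg0 : ∀ y, 0 ≤ g y := fun y => by
    rw [hg]
    have h1 : (0:ℝ) ≤ ‖y‖ ^ b := Real.rpow_nonneg (norm_nonneg _) _
    positivity
  have hgm : AEStronglyMeasurable g volume := by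
    apply Measurable.aestronglyMeasurable
    fun_prop
  have hIeq : ∫ y, g y = (∫⁻ y, ENNReal.ofReal (g y)).toReal :=
    integral_eq_lintegral_of_nonneg_ae (Filter.Eventually.of_forall hg0) hgm
  set L := ∫⁻ y, ENNReal.ofReal (g y) with hL
  have hU : L ≤ D * ENNReal.ofReal (R^(1-b)) := by
    set SA := Metric.ball (0:EuclideanSpace ℝ (Fin N)) (R/2) with hSA
    set SB := Metric.closedBall (0:EuclideanSpace ℝ (Fin N)) (2*R) \ SA with hSB
    set SC := (Metric.ball (0:EuclideanSpace ℝ (Fin N)) (2*R))ᶜ with hSC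
    set S1 := SB ∩ Metric.ball x (R/2) with hS1
    set S2 := SB \ Metric.ball x (R/2) with hS2
    have hsub : (Set.univ : Set (EuclideanSpace ℝ (Fin N))) ⊆ SA ∪ ((S1 ∪ S2) ∪ SC) := by
      intro y _
      by_cases h1 : y ∈ SA
      · exact Or.inl h1
      by_cases h2 : y ∈ Metric.closedBall (0:EuclideanSpace ℝ (Fin N)) (2*R)
      · have hySB : y ∈ SB := ⟨h2, h1⟩
        by_cases h3 : y ∈ Metric.ball x (R/2)
        · exact Or.inr (Or.inl (Or.inl ⟨hySB, h3⟩))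
        · exact Or.inr (Or.inl (Or.inr ⟨hySB, h3⟩))
      · refine Or.inr (Or.inr ?_)
        rw [hSC, Set.mem_compl_iff]
        intro hy
        exact h2 (Metric.ball_subset_closedBall hy)
    have step : L ≤ (∫⁻ y in SA, .ofReal (g y)) +
        (((∫⁻ y in S1, .ofReal (g y)) + ∫⁻ y in S2, .ofReal (g y)) + ∫⁻ y in SC, .ofReal (g y)) := by
      calc L = ∫⁻ y in Set.univ, ENNReal.ofReal (g y) := (setLIntegral_univ _).symm
        _ ≤ ∫⁻ y in SA ∪ ((S1 ∪ S2) ∪ SC), ENNReal.ofReal (g y) := lintegral_mono_set hsub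
        _ ≤ (∫⁻ y in SA, .ofReal (g y)) + ∫⁻ y in (S1 ∪ S2) ∪ SC, .ofReal (g y) :=
            lintegral_union_le _ _ _
        _ ≤ _ := by
            gcongr
            calc ∫⁻ y in (S1 ∪ S2) ∪ SC, ENNReal.ofReal (g y)
                ≤ (∫⁻ y in S1 ∪ S2, .ofReal (g y)) + ∫⁻ y in SC, .ofReal (g y) :=
                  lintegral_union_le _ _ _
              _ ≤ _ := by
                  gcongr
                  exact lintegral_union_le _ _ _
    -- Piece A
    have hA : ∫⁻ y in SA, .ofReal (g y) ≤ C1 * .ofReal (2^(b-1)) * .ofReal (R^(1-b)) := by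
      have h0 : ∀ᵐ y : EuclideanSpace ℝ (Fin N), y ≠ 0 := by
        rw [ae_iff]
        have : {a : EuclideanSpace ℝ (Fin N) | ¬ a ≠ 0} = {0} := by ext a; simp
        rw [this]
        exact measure_singleton 0
      have hpt : ∀ᵐ y, y ∈ SA → ENNReal.ofReal (g y)
          ≤ ENNReal.ofReal ((R/2)^(-d) * ‖y‖^(-b)) := by
        filter_upwards [h0] with y hy0 hySA
        apply ENNReal.ofReal_le_ofReal
        have h1 : ‖y‖ < R/2 := by rwa [hSA, mem_ball_zero_iff] at hySA
        have h2 : R/2 ≤ ‖x - y‖ := by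
          have := norm_sub_norm_le x y
          have hyn : ‖y‖ ≤ R/2 := h1.le
          rw [← hRdef] at this
          linarith
        have h3 : (0:ℝ) < ‖y‖ := norm_pos_iff.2 hy0
        have hbp : (0:ℝ) < ‖y‖^b := Real.rpow_pos_of_pos h3 b
        have hVw : 1 / (1 + ‖y‖^b) ≤ ‖y‖^(-b) := by
          rw [Real.rpow_neg h3.le, ← one_div]
          apply one_div_le_one_div_of_le hbp
          linarith
        have hV0 : (0:ℝ) ≤ 1 / (1 + ‖y‖^b) := by positivity
        calc g y ≤ ‖y‖^(-b) * (R/2)^(-d) := aux_div_le hV0 hVw hR2 h2 hd0.le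
          _ = (R/2)^(-d) * ‖y‖^(-b) := mul_comm _ _
      have hE1 : -d + ((N:ℝ) + -b) = 1 - b := by rw [hdd]; ring
      calc ∫⁻ y in SA, .ofReal (g y)
          ≤ ∫⁻ y in SA, .ofReal ((R/2)^(-d) * ‖y‖^(-b)) :=
            setLIntegral_mono_ae' measurableSet_ball hpt
        _ = ∫⁻ y in SA, .ofReal ((R/2)^(-d)) * .ofReal (‖y‖^(-b)) := by
            simp_rw [ENNReal.ofReal_mul (Real.rpow_nonneg hR2.le _)]
        _ = .ofReal ((R/2)^(-d)) * ∫⁻ y in SA, .ofReal (‖y‖^(-b)) :=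
            lintegral_const_mul' _ _ ENNReal.ofReal_ne_top
        _ ≤ .ofReal ((R/2)^(-d)) * (C1 * .ofReal ((R/2)^((N:ℝ) + -b))) := by
            gcongr
            exact hC1 (R/2) hR2
        _ = C1 * (.ofReal ((R/2)^(-d)) * .ofReal ((R/2)^((N:ℝ) + -b))) := by ring
        _ = C1 * .ofReal ((R/2)^(-d + ((N:ℝ) + -b))) := by
            rw [← ENNReal.ofReal_mul (Real.rpow_nonneg hR2.le _), ← Real.rpow_add hR2]
        _ = C1 * .ofReal (2^(b-1) * R^(1-b)) := by
            rw [hE1, half_rpow hR0.le, show -(1-b) = b-1 from by ring]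
        _ = C1 * .ofReal (2^(b-1)) * .ofReal (R^(1-b)) := by
            rw [ENNReal.ofReal_mul (by positivity)]
            ring
    -- Piece B1
    have hB1 : ∫⁻ y in S1, .ofReal (g y) ≤ C2 * .ofReal (2^(b-1)) * .ofReal (R^(1-b)) := by
      have hpt : ∀ y ∈ S1, ENNReal.ofReal (g y)
          ≤ ENNReal.ofReal ((R/2)^(-b) * ‖x - y‖^(-d)) := by
        rintro y ⟨⟨hy2, hy1⟩, hy3⟩
        apply ENNReal.ofReal_le_ofReal
        have h1 : R/2 ≤ ‖y‖ := by
          have : ¬ (‖y‖ < R/2) := by rwa [hSA, mem_ball_zero_iff] at hy1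
          linarith [not_lt.1 this]
        have h2 : (0:ℝ) < (R/2)^b := Real.rpow_pos_of_pos hR2 b
        have hVw : 1 / (1 + ‖y‖^b) ≤ (R/2)^(-b) := by
          rw [Real.rpow_neg hR2.le, ← one_div]
          apply one_div_le_one_div_of_le h2
          have : (R/2)^b ≤ ‖y‖^b := Real.rpow_le_rpow hR2.le h1 (by linarith)
          linarith
        have hV0 : (0:ℝ) ≤ 1 / (1 + ‖y‖^b) := by
          have : (0:ℝ) ≤ ‖y‖^b := Real.rpow_nonneg (norm_nonneg _) _
          positivity
        exact aux_num_le hV0 hVw (Real.rpow_nonneg hR2.le _) (norm_nonneg _) hd0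
      have hE2 : -b + ((N:ℝ) + -d) = 1 - b := by rw [hdd]; ring
      have hS1m : MeasurableSet S1 :=
        (measurableSet_closedBall.diff measurableSet_ball).inter measurableSet_ball
      calc ∫⁻ y in S1, .ofReal (g y)
          ≤ ∫⁻ y in S1, .ofReal ((R/2)^(-b) * ‖x - y‖^(-d)) := setLIntegral_mono' hS1m hpt
        _ ≤ ∫⁻ y in Metric.ball x (R/2), .ofReal ((R/2)^(-b) * ‖x - y‖^(-d)) :=
            lintegral_mono_set Set.inter_subset_right
        _ = .ofReal ((R/2)^(-b)) * ∫⁻ y in Metric.ball x (R/2), .ofReal (‖x - y‖^(-d)) := by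
            simp_rw [ENNReal.ofReal_mul (Real.rpow_nonneg hR2.le _)]
            exact lintegral_const_mul' _ _ ENNReal.ofReal_ne_top
        _ = .ofReal ((R/2)^(-b)) * ∫⁻ y in Metric.ball (0:EuclideanSpace ℝ (Fin N)) (R/2), .ofReal (‖y‖^(-d)) := by
            rw [aux_translate]
        _ ≤ .ofReal ((R/2)^(-b)) * (C2 * .ofReal ((R/2)^((N:ℝ) + -d))) := by
            gcongr
            exact hC2 (R/2) hR2
        _ = C2 * (.ofReal ((R/2)^(-b)) * .ofReal ((R/2)^((N:ℝ) + -d))) := by ring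
        _ = C2 * .ofReal ((R/2)^(-b + ((N:ℝ) + -d))) := by
            rw [← ENNReal.ofReal_mul (Real.rpow_nonneg hR2.le _), ← Real.rpow_add hR2]
        _ = C2 * .ofReal (2^(b-1) * R^(1-b)) := by
            rw [hE2, half_rpow hR0.le, show -(1-b) = b-1 from by ring]
        _ = C2 * .ofReal (2^(b-1)) * .ofReal (R^(1-b)) := by
            rw [ENNReal.ofReal_mul (by positivity)]
            ring
    -- Piece B2
    have hB2 : ∫⁻ y in S2, .ofReal (g y)
        ≤ .ofReal (2^(2*(N:ℝ)+b-1)) * μB * .ofReal (R^(1-b)) := by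
      have hpt : ∀ y ∈ S2, ENNReal.ofReal (g y)
          ≤ ENNReal.ofReal ((R/2)^(-b) * (R/2)^(-d)) := by
        rintro y ⟨⟨hy2, hy1⟩, hy3⟩
        apply ENNReal.ofReal_le_ofReal
        have h1 : R/2 ≤ ‖y‖ := by
          have : ¬ (‖y‖ < R/2) := by rwa [hSA, mem_ball_zero_iff] at hy1
          linarith [not_lt.1 this]
        have h2 : (0:ℝ) < (R/2)^b := Real.rpow_pos_of_pos hR2 b
        have hVw : 1 / (1 + ‖y‖^b) ≤ (R/2)^(-b) := by
          rw [Real.rpow_neg hR2.le, ← one_div]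
          apply one_div_le_one_div_of_le h2
          have : (R/2)^b ≤ ‖y‖^b := Real.rpow_le_rpow hR2.le h1 (by linarith)
          linarith
        have hV0 : (0:ℝ) ≤ 1 / (1 + ‖y‖^b) := by
          have : (0:ℝ) ≤ ‖y‖^b := Real.rpow_nonneg (norm_nonneg _) _
          positivity
        have hxy : R/2 ≤ ‖x - y‖ := by
          have : ¬ (dist y x < R/2) := hy3
          rw [dist_eq_norm, norm_sub_rev] at this
          linarith [not_lt.1 this]
        exact aux_div_le hV0 hVw hR2 hxy hd0.le
      have hS2m : MeasurableSet S2 :=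
        (measurableSet_closedBall.diff measurableSet_ball).diff measurableSet_ball
      have hreal : (R/2)^(-b) * (R/2)^(-d) * (2*R)^((N:ℝ)) = 2^(2*(N:ℝ)+b-1) * R^(1-b) := by
        rw [← Real.rpow_add hR2, half_rpow hR0.le,
          Real.mul_rpow (by norm_num) hR0.le]
        rw [show (2:ℝ)^(-(-b + -d)) * R^(-b + -d) * ((2:ℝ)^((N:ℝ)) * R^((N:ℝ)))
            = ((2:ℝ)^(-(-b + -d)) * (2:ℝ)^((N:ℝ))) * (R^(-b + -d) * R^((N:ℝ))) from by ring,
          ← Real.rpow_add (by norm_num : (0:ℝ) < 2), ← Real.rpow_add hR0]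
        rw [hdd]
        norm_num
        rw [show ((N:ℝ) - 1 + b + (N:ℝ)) = 2*(N:ℝ) + b - 1 from by ring,
          show (-b + (1 - (N:ℝ)) + (N:ℝ)) = 1 - b from by ring]
      calc ∫⁻ y in S2, .ofReal (g y)
          ≤ ∫⁻ _ in S2, .ofReal ((R/2)^(-b) * (R/2)^(-d)) := setLIntegral_mono' hS2m hpt
        _ = .ofReal ((R/2)^(-b) * (R/2)^(-d)) * volume S2 := setLIntegral_const _ _
        _ ≤ .ofReal ((R/2)^(-b) * (R/2)^(-d))
            * volume (Metric.closedBall (0:EuclideanSpace ℝ (Fin N)) (2*R)) := by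
            gcongr
            exact Set.diff_subset.trans Set.diff_subset
        _ = .ofReal ((R/2)^(-b) * (R/2)^(-d)) * (.ofReal ((2*R)^((N:ℝ))) * μB) := by
            rw [Measure.addHaar_closedBall _ _ (by linarith : (0:ℝ) ≤ 2*R), hfr,
              ← Real.rpow_natCast (2*R) N]
        _ = .ofReal ((R/2)^(-b) * (R/2)^(-d) * (2*R)^((N:ℝ))) * μB := by
            rw [ENNReal.ofReal_mul (by positivity), ENNReal.ofReal_mul (by positivity),
              ENNReal.ofReal_mul (by positivity)]
            ring
        _ = .ofReal (2^(2*(N:ℝ)+b-1) * R^(1-b)) * μB := by rw [hreal]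
        _ = .ofReal (2^(2*(N:ℝ)+b-1)) * μB * .ofReal (R^(1-b)) := by
            rw [ENNReal.ofReal_mul (by positivity)]
            ring
    -- Piece C
    have hCC : ∫⁻ y in SC, .ofReal (g y)
        ≤ .ofReal (2^d) * C3 * .ofReal (2^(1-b)) * .ofReal (R^(1-b)) := by
      have hpt : ∀ y ∈ SC, ENNReal.ofReal (g y) ≤ ENNReal.ofReal (2^d * ‖y‖^(-b + -d)) := by
        intro y hy
        apply ENNReal.ofReal_le_ofReal
        have h2R : 2*R ≤ ‖y‖ := by
          have : ¬ (‖y‖ < 2*R) := by rwa [hSC, Set.mem_compl_iff, mem_ball_zero_iff] at hy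
          linarith [not_lt.1 this]
        have hy0 : (0:ℝ) < ‖y‖ := by linarith
        have hbp : (0:ℝ) < ‖y‖^b := Real.rpow_pos_of_pos hy0 b
        have hVw : 1 / (1 + ‖y‖^b) ≤ ‖y‖^(-b) := by
          rw [Real.rpow_neg hy0.le, ← one_div]
          apply one_div_le_one_div_of_le hbp
          linarith
        have hV0 : (0:ℝ) ≤ 1 / (1 + ‖y‖^b) := by positivity
        have hct : ‖y‖/2 ≤ ‖x - y‖ := by
          have h := norm_sub_norm_le y x
          rw [norm_sub_rev] at h
          have hxn : ‖x‖ = R := hRdef.symm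
          linarith
        calc g y ≤ ‖y‖^(-b) * (‖y‖/2)^(-d) := aux_div_le hV0 hVw (by linarith) hct hd0.le
          _ = 2^d * ‖y‖^(-b + -d) := by
              rw [half_rpow hy0.le, show -(-d) = d from by ring, Real.rpow_add hy0]
              ring
      have hSCm : MeasurableSet SC := measurableSet_ball.compl
      have hE3 : (N:ℝ) + (-b + -d) = 1 - b := by rw [hdd]; ring
      calc ∫⁻ y in SC, .ofReal (g y)
          ≤ ∫⁻ y in SC, .ofReal (2^d * ‖y‖^(-b + -d)) := setLIntegral_mono' hSCm hpt
        _ = .ofReal (2^d) * ∫⁻ y in SC, .ofReal (‖y‖^(-b + -d)) := by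
            simp_rw [ENNReal.ofReal_mul (by positivity : (0:ℝ) ≤ (2:ℝ)^d)]
            exact lintegral_const_mul' _ _ ENNReal.ofReal_ne_top
        _ ≤ .ofReal (2^d) * (C3 * .ofReal ((2*R)^((N:ℝ) + (-b + -d)))) := by
            gcongr
            exact hC3 (2*R) (by linarith)
        _ = .ofReal (2^d) * C3 * .ofReal (2^(1-b) * R^(1-b)) := by
            rw [hE3, Real.mul_rpow (by norm_num) hR0.le]
            ring
        _ = .ofReal (2^d) * C3 * .ofReal (2^(1-b)) * .ofReal (R^(1-b)) := by
            rw [ENNReal.ofReal_mul (by positivity)]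
            ring
    calc L ≤ (∫⁻ y in SA, .ofReal (g y)) +
        (((∫⁻ y in S1, .ofReal (g y)) + ∫⁻ y in S2, .ofReal (g y)) + ∫⁻ y in SC, .ofReal (g y)) :=
          step
      _ ≤ (C1 * .ofReal (2^(b-1)) * .ofReal (R^(1-b))) +
          (((C2 * .ofReal (2^(b-1)) * .ofReal (R^(1-b)))
            + (.ofReal (2^(2*(N:ℝ)+b-1)) * μB * .ofReal (R^(1-b))))
            + (.ofReal (2^d) * C3 * .ofReal (2^(1-b)) * .ofReal (R^(1-b)))) :=
            add_le_add hA (add_le_add (add_le_add hB1 hB2) hCC)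
      _ = D * .ofReal (R^(1-b)) := by rw [hD]; ring
  
  have hLlow : ENNReal.ofReal (c4 * R^(1-b)) * μB ≤ L := by
    set S := Metric.ball x (R/2) \ Metric.closedBall x (R/4) with hSdef
    have hSm : MeasurableSet S := measurableSet_ball.diff measurableSet_closedBall
    set m : ℝ := (2*(3/2:ℝ)^b * R^b)⁻¹ * ((R/2)^d)⁻¹ with hm
    have hm0 : (0:ℝ) ≤ m := by positivity
    have hpt : ∀ y ∈ S, ENNReal.ofReal m ≤ ENNReal.ofReal (g y) := by
      rintro y ⟨hy1, hy2⟩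
      apply ENNReal.ofReal_le_ofReal
      have hxn : ‖x‖ = R := hRdef.symm
      rw [Metric.mem_ball, dist_comm, dist_eq_norm] at hy1
      rw [Metric.mem_closedBall, dist_comm, dist_eq_norm] at hy2
      push_neg at hy2
      have ht1 : ‖x - y‖ < R/2 := hy1
      have ht2 : R/4 < ‖x - y‖ := hy2
      have hyn : ‖y‖ ≤ 3/2 * R := by
        have h := norm_sub_norm_le y x
        rw [norm_sub_rev] at h
        linarith
      have hden : ‖x - y‖^d ≤ (R/2)^d := Real.rpow_le_rpow (norm_nonneg _) ht1.le hd0.le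
      have hdenp : (0:ℝ) < ‖x - y‖^d := Real.rpow_pos_of_pos (by linarith) d
      have h32 : (1:ℝ) ≤ 3/2*R := by linarith
      have hnum2 : ‖y‖^b ≤ (3/2*R)^b := Real.rpow_le_rpow (norm_nonneg _) hyn (by linarith)
      have hone : (1:ℝ) ≤ (3/2*R)^b := by
        calc (1:ℝ) = 1^b := (Real.one_rpow b).symm
          _ ≤ (3/2*R)^b := Real.rpow_le_rpow (by norm_num) h32 (by linarith)
      have hsplit : ((3/2*R):ℝ)^b = (3/2:ℝ)^b * R^b := Real.mul_rpow (by norm_num) hR0.le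
      have hyb0 : (0:ℝ) ≤ ‖y‖^b := Real.rpow_nonneg (norm_nonneg _) _
      have ha : (2*(3/2:ℝ)^b * R^b)⁻¹ ≤ 1/(1 + ‖y‖^b) := by
        rw [inv_eq_one_div]
        apply one_div_le_one_div_of_le (by positivity)
        calc 1 + ‖y‖^b ≤ 2*(3/2*R)^b := by linarith
          _ = 2*(3/2:ℝ)^b * R^b := by rw [hsplit]; ring
      calc m = (2*(3/2:ℝ)^b * R^b)⁻¹ / (R/2)^d := by
            rw [hm]
            exact (div_eq_mul_inv _ _).symm
        _ ≤ (1/(1 + ‖y‖^b)) / ‖x - y‖^d := div_le_div₀ (by positivity) ha hdenp hden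
        _ = g y := by rw [hg]
    have hvol : volume S = ENNReal.ofReal ((R/2)^(N:ℕ) - (R/4)^(N:ℕ)) * μB := by
      rw [hSdef, measure_diff (Metric.closedBall_subset_ball (by linarith))
        measurableSet_closedBall.nullMeasurableSet measure_closedBall_lt_top.ne,
        Measure.addHaar_ball _ _ (by linarith : (0:ℝ) ≤ R/2),
        Measure.addHaar_closedBall _ _ (by linarith : (0:ℝ) ≤ R/4), hfr]
      rw [← ENNReal.sub_mul (fun _ _ => hμBt), ← ENNReal.ofReal_sub _ (by positivity)]
    have hkey : m * ((R/2)^(N:ℕ) - (R/4)^(N:ℕ)) = c4 * R^(1-b) := by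
      have hRN : (R:ℝ)^(N:ℕ) = R^((N:ℝ)) := (Real.rpow_natCast R N).symm
      have hinv1 : (2*(3/2:ℝ)^b * R^b)⁻¹ = (2*(3/2:ℝ)^b)⁻¹ * R^(-b) := by
        rw [mul_inv, Real.rpow_neg hR0.le]
      have h2d : (2:ℝ)^(-d) = ((2:ℝ)^d)⁻¹ := Real.rpow_neg (by norm_num) d
      have hinv2 : (((R/2):ℝ)^d)⁻¹ = 2^d * R^(-d) := by
        rw [half_rpow hR0.le d, h2d, mul_inv, inv_inv, Real.rpow_neg hR0.le]
      have hΔ : ((R/2):ℝ)^(N:ℕ) - ((R/4):ℝ)^(N:ℕ)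
          = R^(N:ℕ) * ((2:ℝ)⁻¹^(N:ℕ) - (4:ℝ)⁻¹^(N:ℕ)) := by
        rw [div_eq_mul_inv R 2, div_eq_mul_inv R 4, mul_pow, mul_pow]
        ring
      calc m * ((R/2)^(N:ℕ) - (R/4)^(N:ℕ))
          = (2*(3/2:ℝ)^b)⁻¹ * 2^d * ((2:ℝ)⁻¹^(N:ℕ) - (4:ℝ)⁻¹^(N:ℕ))
            * (R^(-b) * R^(-d) * R^((N:ℝ))) := by
            rw [hm, hinv1, hinv2, hΔ, hRN]
            ring
        _ = c4 * R^(1-b) := by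
            rw [← Real.rpow_add hR0, ← Real.rpow_add hR0, hc4,
              show -b + -d + (N:ℝ) = 1 - b from by rw [hdd]; ring]
    calc ENNReal.ofReal (c4 * R^(1-b)) * μB = ENNReal.ofReal m * volume S := by
          rw [hvol, ← hkey, ENNReal.ofReal_mul hm0, mul_assoc]
      _ = ∫⁻ _ in S, ENNReal.ofReal m := (setLIntegral_const _ _).symm
      _ ≤ ∫⁻ y in S, ENNReal.ofReal (g y) := setLIntegral_mono' hSm hpt
      _ ≤ ∫⁻ y in (Set.univ : Set (EuclideanSpace ℝ (Fin N))), ENNReal.ofReal (g y) :=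
          lintegral_mono_set (Set.subset_univ _)
      _ = L := by rw [setLIntegral_univ]
  have hLt : L ≠ ∞ :=
    (lt_of_le_of_lt hU (ENNReal.mul_lt_top hDt.lt_top ENNReal.ofReal_lt_top)).ne
  have hIle : ∫ y, g y ≤ D.toReal * R^(1-b) := by
    rw [hIeq]
    calc L.toReal ≤ (D * ENNReal.ofReal (R^(1-b))).toReal :=
          ENNReal.toReal_mono (ENNReal.mul_ne_top hDt ENNReal.ofReal_ne_top) hU
      _ = D.toReal * R^(1-b) := by
          rw [ENNReal.toReal_mul, ENNReal.toReal_ofReal (by positivity)]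
  have hIge : c4 * R^(1-b) * μB.toReal ≤ ∫ y, g y := by
    rw [hIeq]
    calc c4 * R^(1-b) * μB.toReal = (ENNReal.ofReal (c4 * R^(1-b)) * μB).toReal := by
          rw [ENNReal.toReal_mul, ENNReal.toReal_ofReal (by positivity)]
      _ ≤ L.toReal := ENNReal.toReal_mono hLt hLlow
  constructor
  · calc cN * (c4 * μB.toReal) * R^(1-b) = cN * (c4 * R^(1-b) * μB.toReal) := by ring
      _ ≤ cN * ∫ y, g y := mul_le_mul_of_nonneg_left hIge hcN0.le
  · calc cN * ∫ y, g y ≤ cN * (D.toReal * R^(1-b)) := mul_le_mul_of_nonneg_left hIle hcN0.le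
      _ ≤ cN * ((D.toReal + 1) * R^(1-b)) := by
          have h1 : (0:ℝ) ≤ R^(1-b) := by positivity
          have h2 : D.toReal * R^(1-b) ≤ (D.toReal + 1) * R^(1-b) := by nlinarith
          exact mul_le_mul_of_nonneg_left h2 hcN0.le
      _ = cN * (D.toReal + 1) * R^(1-b) := by ring
end

section
/- Let N ≥ 3 and b > N. Define V(x) = 1/(1+|x|^b) on ℝ^N. Then there exist constants c, C > 0 such that for all |x| > 1, c·|x|^{1-N} ≤ I₁V(x) ≤ C·|x|^{1-N}. -/
open MeasureTheory Real Set Metric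
open scoped ENNReal

section Stmt2Aux

theorem stmt2_aux_intOn (N : ℕ) (hN : 2 ≤ N) (R : ℝ) :
    IntegrableOn (fun z : EuclideanSpace ℝ (Fin N) => ‖z‖ ^ ((1:ℝ) - N))
      (ball 0 R) volume := by
  set E := EuclideanSpace ℝ (Fin N) with hE
  have hs : (0:ℝ) < (N:ℝ) - 1 := by
    have : (2:ℝ) ≤ N := by exact_mod_cast hN
    linarith
  set s : ℝ := (N:ℝ) - 1 with hs_def
  have hexp : (1:ℝ) - N = -s := by rw [hs_def]; ring
  have hmeas : Measurable fun z : E => ‖z‖ ^ ((1:ℝ) - N) := by fun_prop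
  have hnonneg : ∀ z : E, 0 ≤ ‖z‖ ^ ((1:ℝ) - N) := fun z => rpow_nonneg (norm_nonneg z) _
  refine ⟨hmeas.aestronglyMeasurable.restrict, ?_⟩
  have hnn : (∫⁻ z in ball (0:E) R, ‖(‖z‖ ^ ((1:ℝ) - N))‖ₑ ∂volume)
      = ∫⁻ z in ball (0:E) R, ENNReal.ofReal (‖z‖ ^ ((1:ℝ) - N)) ∂volume :=
    lintegral_enorm_of_nonneg fun z => hnonneg z
  rw [HasFiniteIntegral, hnn,
    lintegral_eq_lintegral_meas_le _ (Filter.Eventually.of_forall hnonneg)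
      hmeas.aemeasurable]
  set μ' := (volume : Measure E).restrict (ball 0 R) with hμ'
  have hsub : ∀ t : ℝ, 0 < t →
      {a : E | t ≤ ‖a‖ ^ ((1:ℝ) - N)} ⊆ closedBall (0:E) (t ^ (-s⁻¹)) := by
    intro t ht a ha
    simp only [mem_setOf_eq] at ha
    rcases eq_or_ne a 0 with rfl | ha0
    · rw [norm_zero, Real.zero_rpow (by rw [hexp]; exact (neg_ne_zero.2 hs.ne'))] at ha
      linarith
    · have hna : 0 < ‖a‖ := norm_pos_iff.2 ha0
      rw [mem_closedBall_zero_iff]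
      have h1 : (‖a‖ ^ ((1:ℝ) - N)) ^ (-s⁻¹) ≤ t ^ (-s⁻¹) :=
        Real.rpow_le_rpow_of_nonpos ht ha (neg_nonpos.2 (inv_nonneg.2 hs.le))
      calc ‖a‖ = (‖a‖ ^ ((1:ℝ) - N)) ^ (-s⁻¹) := by
              rw [← Real.rpow_mul (norm_nonneg a), hexp]
              rw [show -s * -s⁻¹ = s * s⁻¹ by ring, mul_inv_cancel₀ hs.ne', Real.rpow_one]
          _ ≤ t ^ (-s⁻¹) := h1
  calc ∫⁻ t in Ioi (0:ℝ), μ' {a : E | t ≤ ‖a‖ ^ ((1:ℝ) - N)}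
      ≤ ∫⁻ t in Ioc (0:ℝ) 1 ∪ Ioi 1, μ' {a : E | t ≤ ‖a‖ ^ ((1:ℝ) - N)} :=
        lintegral_mono_set Ioi_subset_Ioc_union_Ioi
    _ ≤ (∫⁻ t in Ioc (0:ℝ) 1, μ' {a : E | t ≤ ‖a‖ ^ ((1:ℝ) - N)})
        + ∫⁻ t in Ioi (1:ℝ), μ' {a : E | t ≤ ‖a‖ ^ ((1:ℝ) - N)} := lintegral_union_le _ _ _
    _ < ∞ := by
        refine ENNReal.add_lt_top.2 ⟨?_, ?_⟩
        · calc (∫⁻ t in Ioc (0:ℝ) 1, μ' {a : E | t ≤ ‖a‖ ^ ((1:ℝ) - N)})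
              ≤ ∫⁻ _ in Ioc (0:ℝ) 1, volume (ball (0:E) R) := by
                refine setLIntegral_mono' measurableSet_Ioc fun t _ => ?_
                exact le_trans (measure_mono (subset_univ _))
                  (by rw [hμ', Measure.restrict_apply_univ])
            _ < ∞ := by
                rw [lintegral_const, Measure.restrict_apply_univ]
                exact ENNReal.mul_lt_top measure_ball_lt_top (by simp [Real.volume_Ioc])
        · have hbound : ∀ t ∈ Ioi (1:ℝ), μ' {a : E | t ≤ ‖a‖ ^ ((1:ℝ) - N)}
              ≤ ENNReal.ofReal ((t ^ (-((N:ℝ)/s)))) * volume (ball (0:E) 1) := by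
            intro t ht
            have ht0 : (0:ℝ) < t := lt_trans one_pos ht
            have h1 : μ' {a : E | t ≤ ‖a‖ ^ ((1:ℝ) - N)}
                ≤ volume (closedBall (0:E) (t ^ (-s⁻¹))) :=
              le_trans (Measure.restrict_le_self _) (measure_mono (hsub t ht0))
            refine h1.trans ?_
            rw [Measure.addHaar_closedBall _ _ (rpow_nonneg ht0.le _)]
            have : ((t ^ (-s⁻¹)) ^ (Module.finrank ℝ E) : ℝ) = t ^ (-((N:ℝ)/s)) := by
              rw [← Real.rpow_natCast (t ^ (-s⁻¹)), ← Real.rpow_mul ht0.le]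
              congr 1
              have hfr : Module.finrank ℝ E = N := finrank_euclideanSpace_fin
              rw [hfr]
              ring
            rw [this]
          calc (∫⁻ t in Ioi (1:ℝ), μ' {a : E | t ≤ ‖a‖ ^ ((1:ℝ) - N)})
              ≤ ∫⁻ t in Ioi (1:ℝ), ENNReal.ofReal ((t ^ (-((N:ℝ)/s)))) * volume (ball (0:E) 1) :=
                setLIntegral_mono' measurableSet_Ioi hbound
            _ = (∫⁻ t in Ioi (1:ℝ), ENNReal.ofReal ((t ^ (-((N:ℝ)/s))))) * volume (ball (0:E) 1) :=
                lintegral_mul_const' _ _ measure_ball_lt_top.ne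
            _ < ∞ := by
                refine ENNReal.mul_lt_top ?_ measure_ball_lt_top
                refine IntegrableOn.setLIntegral_lt_top ?_
                refine integrableOn_Ioi_rpow_of_lt ?_ one_pos
                rw [neg_lt_neg_iff]
                rw [lt_div_iff₀ hs, one_mul, hs_def]
                linarith

theorem stmt2_aux_val (N : ℕ) (hN : 2 ≤ N) {R : ℝ} (hR : 0 < R) :
    ∫ z in ball (0 : EuclideanSpace ℝ (Fin N)) R, ‖z‖ ^ ((1:ℝ) - N)
      = (N : ℝ) * (volume (ball (0 : EuclideanSpace ℝ (Fin N)) 1)).toReal * R := by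
  set E := EuclideanSpace ℝ (Fin N) with hE
  haveI : Nonempty (Fin N) := ⟨⟨0, by omega⟩⟩
  haveI : Nontrivial E := by
    refine Module.nontrivial_of_finrank_pos (R := ℝ) ?_
    rw [show Module.finrank ℝ E = N from finrank_euclideanSpace_fin]
    omega
  have hfr : Module.finrank ℝ E = N := finrank_euclideanSpace_fin
  have key := MeasureTheory.integral_fun_norm_addHaar (volume : Measure E)
      (Set.indicator (Iio R) (fun t : ℝ => t ^ ((1:ℝ) - N)))
  have hLHS : (∫ x : E, Set.indicator (Iio R) (fun t : ℝ => t ^ ((1:ℝ) - N)) ‖x‖)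
      = ∫ z in ball (0 : E) R, ‖z‖ ^ ((1:ℝ) - N) := by
    rw [← integral_indicator measurableSet_ball]
    congr 1
    funext z
    by_cases hz : z ∈ ball (0:E) R
    · rw [Set.indicator_of_mem hz, Set.indicator_of_mem (by rwa [mem_Iio, ← mem_ball_zero_iff])]
    · rw [Set.indicator_of_notMem hz, Set.indicator_of_notMem
        (by rwa [mem_Iio, ← mem_ball_zero_iff])]
  have hIoi : (∫ y in Ioi (0:ℝ), y ^ (Module.finrank ℝ E - 1) •
      Set.indicator (Iio R) (fun t : ℝ => t ^ ((1:ℝ) - N)) y) = R := by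
    rw [setIntegral_congr_fun measurableSet_Ioi
      (g := Set.indicator (Iio R) (fun _ : ℝ => (1:ℝ)))]
    · rw [setIntegral_indicator measurableSet_Iio, Ioi_inter_Iio, setIntegral_const]
      simp [Real.volume_Ioo, hR.le]
    · intro y hy
      have hy0 : (0:ℝ) < y := hy
      by_cases hyR : y ∈ Iio R
      · simp only [Set.indicator_of_mem hyR, smul_eq_mul, hfr]
        rw [← Real.rpow_natCast y (N-1), ← Real.rpow_add hy0]
        rw [show ((N - 1 : ℕ) : ℝ) + (1 - N) = 0 by
          rw [Nat.cast_sub (by omega)]; push_cast; ring]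
        exact Real.rpow_zero y
      · simp [Set.indicator_of_notMem hyR]
  rw [hLHS, hIoi, hfr] at key
  rw [key]
  simp only [nsmul_eq_mul, smul_eq_mul, measureReal_def]
  ring

theorem stmt2_aux_trans (N : ℕ) (x : EuclideanSpace ℝ (Fin N)) (R : ℝ)
    (hA : IntegrableOn (fun z : EuclideanSpace ℝ (Fin N) => ‖z‖ ^ ((1:ℝ) - N)) (ball 0 R) volume) :
    IntegrableOn (fun y : EuclideanSpace ℝ (Fin N) => ‖x - y‖ ^ ((1:ℝ) - N)) (ball x R) volume ∧
    (∫ y in ball x R, ‖x - y‖ ^ ((1:ℝ) - N))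
      = ∫ z in ball (0 : EuclideanSpace ℝ (Fin N)) R, ‖z‖ ^ ((1:ℝ) - N) := by
  set F : (EuclideanSpace ℝ (Fin N)) → ℝ :=
    Set.indicator (ball (0:EuclideanSpace ℝ (Fin N)) R) (fun z => ‖z‖ ^ ((1:ℝ) - N)) with hF
  have key : ∀ y : EuclideanSpace ℝ (Fin N), F (x - y) =
      Set.indicator (ball x R) (fun y : EuclideanSpace ℝ (Fin N) => ‖x - y‖ ^ ((1:ℝ) - N)) y := by
    intro y
    have hmem : x - y ∈ ball (0:EuclideanSpace ℝ (Fin N)) R ↔ y ∈ ball x R := by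
      rw [mem_ball_zero_iff, mem_ball, dist_eq_norm, norm_sub_rev]
    by_cases h : y ∈ ball x R
    · rw [hF, Set.indicator_of_mem (hmem.2 h), Set.indicator_of_mem h]
    · rw [hF, Set.indicator_of_notMem (fun hc => h (hmem.1 hc)), Set.indicator_of_notMem h]
  have hFint : Integrable F := (integrable_indicator_iff measurableSet_ball).2 hA
  constructor
  · rw [← integrable_indicator_iff measurableSet_ball]
    have : Integrable (fun y : EuclideanSpace ℝ (Fin N) => F (x - y)) :=
      (integrable_comp_sub_left F x).2 hFint
    exact this.congr (Filter.Eventually.of_forall fun y => key y)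
  · rw [← integral_indicator measurableSet_ball, ← integral_indicator measurableSet_ball]
    have h1 : (fun y : EuclideanSpace ℝ (Fin N) =>
        Set.indicator (ball x R) (fun y : EuclideanSpace ℝ (Fin N) => ‖x - y‖ ^ ((1:ℝ) - N)) y)
        = fun y : EuclideanSpace ℝ (Fin N) => F (x - y) := funext fun y => (key y).symm
    rw [h1]
    exact integral_sub_left_eq_self F volume x

theorem stmt2_V_le (b : ℝ) (hb : 0 < b) {E : Type*} [NormedAddCommGroup E] (y : E) :
    1 / (1 + ‖y‖ ^ b) ≤ 2 ^ b * (1 + ‖y‖) ^ (-b) := by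
  set t : ℝ := ‖y‖ with ht_def
  have ht : 0 ≤ t := norm_nonneg y
  have htb : 0 ≤ t ^ b := rpow_nonneg ht b
  have h1 : (1:ℝ) ≤ (1 + t ^ b) ^ b⁻¹ :=
    Real.one_le_rpow (by linarith) (inv_nonneg.2 hb.le)
  have h2 : t ≤ (1 + t ^ b) ^ b⁻¹ := by
    calc t = (t ^ b) ^ b⁻¹ := by
          rw [← Real.rpow_mul ht, mul_inv_cancel₀ hb.ne', Real.rpow_one]
      _ ≤ (1 + t ^ b) ^ b⁻¹ := Real.rpow_le_rpow htb (by linarith) (inv_nonneg.2 hb.le)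
  have h3 : (1 + t) ^ b ≤ 2 ^ b * (1 + t ^ b) := by
    calc (1 + t) ^ b ≤ (2 * (1 + t ^ b) ^ b⁻¹) ^ b :=
          Real.rpow_le_rpow (by linarith) (by linarith) hb.le
      _ = 2 ^ b * ((1 + t ^ b) ^ b⁻¹) ^ b := Real.mul_rpow (by norm_num) (by positivity)
      _ = 2 ^ b * (1 + t ^ b) := by
          rw [← Real.rpow_mul (by linarith), inv_mul_cancel₀ hb.ne', Real.rpow_one]
  have hp1 : (0:ℝ) < 1 + t ^ b := by linarith
  have hp2 : (0:ℝ) < (1 + t) ^ b := rpow_pos_of_pos (by linarith) b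
  calc 1 / (1 + t ^ b) ≤ 2 ^ b / (1 + t) ^ b := by
        rw [div_le_div_iff₀ hp1 hp2]; linarith
    _ = 2 ^ b * (1 + t) ^ (-b) := by
        rw [Real.rpow_neg (by linarith)]; ring

theorem stmt2_intV (N : ℕ) (b : ℝ) (hb : (N:ℝ) < b) :
    Integrable (fun y : EuclideanSpace ℝ (Fin N) => 1 / (1 + ‖y‖ ^ b)) volume := by
  have hb0 : 0 < b := lt_of_le_of_lt (Nat.cast_nonneg N) hb
  have hnr : (Module.finrank ℝ (EuclideanSpace ℝ (Fin N)) : ℝ) < b := by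
    rwa [finrank_euclideanSpace_fin]
  have base := (integrable_one_add_norm
    (μ := (volume : Measure (EuclideanSpace ℝ (Fin N)))) hnr).const_mul ((2:ℝ) ^ b)
  refine base.mono' ?_ ?_
  · exact (by fun_prop :
      Measurable fun y : EuclideanSpace ℝ (Fin N) => 1 / (1 + ‖y‖ ^ b)).aestronglyMeasurable
  refine Filter.Eventually.of_forall fun y => ?_
  have h0 : (0:ℝ) < 1 + ‖y‖ ^ b := by positivity
  rw [Real.norm_eq_abs, abs_of_nonneg (by positivity)]
  exact stmt2_V_le b hb0 y

end Stmt2Aux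

/-- For `N ≥ 3`, `b > N`, `V x = 1/(1+|x|^b)`, one has
`I₁V(x) ≍ |x|^(1-N)` for `|x| > 1`. -/
theorem stmt2 (N : ℕ) (hN : 3 ≤ N) (b : ℝ) (hb : (N : ℝ) < b) :
    ∃ c C : ℝ, 0 < c ∧ 0 < C ∧
      ∀ x : EuclideanSpace ℝ (Fin N), 1 < ‖x‖ →
        c * ‖x‖ ^ (1 - (N : ℝ)) ≤
          (Real.Gamma (((N : ℝ) - 1) / 2) /
              (π ^ ((N : ℝ) / 2) * 2 * Real.Gamma (1 / 2))) *
            ∫ y : EuclideanSpace ℝ (Fin N),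
              (1 / (1 + ‖y‖ ^ b)) / ‖x - y‖ ^ ((N : ℝ) - 1) ∧
        (Real.Gamma (((N : ℝ) - 1) / 2) /
              (π ^ ((N : ℝ) / 2) * 2 * Real.Gamma (1 / 2))) *
            ∫ y : EuclideanSpace ℝ (Fin N),
              (1 / (1 + ‖y‖ ^ b)) / ‖x - y‖ ^ ((N : ℝ) - 1) ≤ C * ‖x‖ ^ (1 - (N : ℝ)) := by
  have hN2 : 2 ≤ N := by omega
  have hNR : (3:ℝ) ≤ N := by exact_mod_cast hN
  have hb0 : 0 < b := lt_of_le_of_lt (Nat.cast_nonneg N) hb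
  set K : ℝ := Real.Gamma (((N : ℝ) - 1) / 2) /
      (π ^ ((N : ℝ) / 2) * 2 * Real.Gamma (1 / 2)) with hK_def
  have hK : 0 < K := by
    refine div_pos (Real.Gamma_pos_of_pos (by linarith)) ?_
    exact mul_pos (mul_pos (rpow_pos_of_pos pi_pos _) two_pos)
      (Real.Gamma_pos_of_pos (by norm_num))
  set volB : ℝ := (volume (ball (0 : EuclideanSpace ℝ (Fin N)) 1)).toReal with hvolB_def
  have hvolB : 0 < volB :=
    ENNReal.toReal_pos (measure_ball_pos volume 0 one_pos).ne' measure_ball_lt_top.ne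
  have hVint := stmt2_intV N b hb
  set IV : ℝ := ∫ y : EuclideanSpace ℝ (Fin N), 1 / (1 + ‖y‖ ^ b) with hIV_def
  have hIV : 0 ≤ IV := integral_nonneg fun y => by positivity
  refine ⟨K * (volB * (1/2) * 2 ^ ((1:ℝ) - (N:ℝ))),
    K * ((N:ℝ) * volB * 2 ^ (b - 1) + IV * 2 ^ ((N:ℝ) - 1)), ?_, ?_, ?_⟩
  · have : (0:ℝ) < 2 ^ ((1:ℝ) - (N:ℝ)) := rpow_pos_of_pos two_pos _
    positivity
  · have h1 : (0:ℝ) < 2 ^ (b - 1) := rpow_pos_of_pos two_pos _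
    have h2 : (0:ℝ) < 2 ^ ((N:ℝ) - 1) := rpow_pos_of_pos two_pos _
    have h3 : (0:ℝ) < (N:ℝ) := by linarith
    nlinarith [mul_nonneg hIV h2.le, mul_pos (mul_pos h3 hvolB) h1]
  intro x hx
  have hx1 : (1:ℝ) ≤ ‖x‖ := hx.le
  -- rewrite the integrand
  have hJeq : (∫ y : EuclideanSpace ℝ (Fin N),
        (1 / (1 + ‖y‖ ^ b)) / ‖x - y‖ ^ ((N : ℝ) - 1))
      = ∫ y : EuclideanSpace ℝ (Fin N),
        (1 / (1 + ‖y‖ ^ b)) * ‖x - y‖ ^ ((1:ℝ) - (N:ℝ)) := by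
    congr 1
    funext y
    rw [div_eq_mul_inv, ← Real.rpow_neg (norm_nonneg _), neg_sub]
  rw [hJeq]
  set g : EuclideanSpace ℝ (Fin N) → ℝ :=
    fun y => (1 / (1 + ‖y‖ ^ b)) * ‖x - y‖ ^ ((1:ℝ) - (N:ℝ)) with hg_def
  have hg_nonneg : ∀ y, 0 ≤ g y := fun y =>
    mul_nonneg (by positivity) (rpow_nonneg (norm_nonneg _) _)
  -- integrability of g
  have hC1 : ∀ R : ℝ, IntegrableOn
      (fun y : EuclideanSpace ℝ (Fin N) => ‖x - y‖ ^ ((1:ℝ) - (N:ℝ))) (ball x R) volume :=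
    fun R => (stmt2_aux_trans N x R (stmt2_aux_intOn N hN2 R)).1
  have hC2 : ∀ R : ℝ, 0 < R → (∫ y in ball x R, ‖x - y‖ ^ ((1:ℝ) - (N:ℝ)))
      = (N : ℝ) * volB * R := fun R hR => by
    rw [(stmt2_aux_trans N x R (stmt2_aux_intOn N hN2 R)).2, stmt2_aux_val N hN2 hR]
  have hg : Integrable g volume := by
    have hmeas : Measurable g := by fun_prop
    set B : EuclideanSpace ℝ (Fin N) → ℝ := fun y =>
      Set.indicator (ball x 1) (fun y => ‖x - y‖ ^ ((1:ℝ) - (N:ℝ))) y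
        + 2 ^ b * (1 + ‖y‖) ^ (-b) with hB_def
    have hBint : Integrable B volume := by
      refine Integrable.add ?_ ?_
      · exact (integrable_indicator_iff measurableSet_ball).2 (hC1 1)
      · refine (integrable_one_add_norm ?_).const_mul _
        rwa [finrank_euclideanSpace_fin]
    refine hBint.mono' hmeas.aestronglyMeasurable (Filter.Eventually.of_forall fun y => ?_)
    rw [Real.norm_eq_abs, abs_of_nonneg (hg_nonneg y)]
    have hVle1 : 1 / (1 + ‖y‖ ^ b) ≤ 1 := by
      rw [div_le_one (by positivity)]
      have : (0:ℝ) ≤ ‖y‖ ^ b := rpow_nonneg (norm_nonneg _) _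
      linarith
    have hind_nonneg : 0 ≤ Set.indicator (ball x 1)
        (fun y => ‖x - y‖ ^ ((1:ℝ) - (N:ℝ))) y :=
      Set.indicator_nonneg (fun z _ => rpow_nonneg (norm_nonneg _) _) y
    by_cases hy : y ∈ ball x 1
    · calc g y ≤ 1 * ‖x - y‖ ^ ((1:ℝ) - (N:ℝ)) :=
            mul_le_mul_of_nonneg_right hVle1 (rpow_nonneg (norm_nonneg _) _)
        _ = Set.indicator (ball x 1) (fun y => ‖x - y‖ ^ ((1:ℝ) - (N:ℝ))) y := by
            rw [one_mul, Set.indicator_of_mem hy]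
        _ ≤ B y := le_add_of_nonneg_right (by positivity)
    · have hxy1 : 1 ≤ ‖x - y‖ := by
        rw [mem_ball, not_lt] at hy
        rw [norm_sub_rev, ← dist_eq_norm]
        exact hy
      have hW1 : ‖x - y‖ ^ ((1:ℝ) - (N:ℝ)) ≤ 1 :=
        Real.rpow_le_one_of_one_le_of_nonpos hxy1 (by linarith)
      calc g y ≤ (1 / (1 + ‖y‖ ^ b)) * 1 :=
            mul_le_mul_of_nonneg_left hW1 (by positivity)
        _ = 1 / (1 + ‖y‖ ^ b) := mul_one _
        _ ≤ 2 ^ b * (1 + ‖y‖) ^ (-b) := stmt2_V_le b hb0 y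
        _ ≤ B y := le_add_of_nonneg_left hind_nonneg
  constructor
  · -- lower bound
    have hlow1 : (∫ y in ball (0:EuclideanSpace ℝ (Fin N)) 1, g y) ≤ ∫ y, g y :=
      setIntegral_le_integral hg (Filter.Eventually.of_forall hg_nonneg)
    have hlow2 : ((1/2) * (2 ^ ((1:ℝ) - (N:ℝ)) * ‖x‖ ^ ((1:ℝ) - (N:ℝ)))) * volB
        ≤ ∫ y in ball (0:EuclideanSpace ℝ (Fin N)) 1, g y := by
      rw [hvolB_def]
      refine setIntegral_ge_of_const_le_real measurableSet_ball measure_ball_lt_top.ne ?_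
        hg.integrableOn
      intro y hy
      rw [mem_ball_zero_iff] at hy
      have hyb : ‖y‖ ^ b ≤ 1 := Real.rpow_le_one (norm_nonneg y) hy.le hb0.le
      have hV2 : (1:ℝ)/2 ≤ 1 / (1 + ‖y‖ ^ b) := by
        apply one_div_le_one_div_of_le (by positivity)
        linarith
      have hns : ‖x‖ - ‖y‖ ≤ ‖x - y‖ := norm_sub_norm_le x y
      have hxy_pos : 0 < ‖x - y‖ := by linarith
      have hxy_le : ‖x - y‖ ≤ 2 * ‖x‖ := by
        have := norm_sub_le x y
        linarith
      have hW2 : (2 * ‖x‖) ^ ((1:ℝ) - (N:ℝ)) ≤ ‖x - y‖ ^ ((1:ℝ) - (N:ℝ)) :=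
        Real.rpow_le_rpow_of_nonpos hxy_pos hxy_le (by linarith)
      have hsplit : ((2 * ‖x‖) : ℝ) ^ ((1:ℝ) - (N:ℝ))
          = 2 ^ ((1:ℝ) - (N:ℝ)) * ‖x‖ ^ ((1:ℝ) - (N:ℝ)) :=
        Real.mul_rpow (by norm_num) (norm_nonneg x)
      have hkey := mul_le_mul hV2 hW2 (rpow_nonneg (by positivity) _) (by positivity)
      rw [hsplit] at hkey
      exact hkey
    calc K * (volB * (1/2) * 2 ^ ((1:ℝ) - (N:ℝ))) * ‖x‖ ^ (1 - (N:ℝ))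
        = K * (((1/2) * (2 ^ ((1:ℝ) - (N:ℝ)) * ‖x‖ ^ ((1:ℝ) - (N:ℝ)))) * volB) := by ring
      _ ≤ K * ∫ y, g y := mul_le_mul_of_nonneg_left (hlow2.trans hlow1) hK.le
  · -- upper bound
    set t : ℝ := ‖x‖ / 2 with ht_def
    have ht : 0 < t := by rw [ht_def]; linarith
    have hx2t : ‖x‖ = 2 * t := by rw [ht_def]; ring
    have hsplit_int : (∫ y in ball x t, g y) + (∫ y in (ball x t)ᶜ, g y) = ∫ y, g y :=
      integral_add_compl measurableSet_ball hg
    have hnear : (∫ y in ball x t, g y)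
        ≤ (N:ℝ) * volB * 2 ^ (b - 1) * ‖x‖ ^ ((1:ℝ) - (N:ℝ)) := by
      have hstep1 : (∫ y in ball x t, g y)
          ≤ ∫ y in ball x t, t ^ (-b) * ‖x - y‖ ^ ((1:ℝ) - (N:ℝ)) := by
        refine setIntegral_mono_on hg.integrableOn ((hC1 t).const_mul _) measurableSet_ball ?_
        intro y hy
        rw [mem_ball] at hy
        have hyt : t ≤ ‖y‖ := by
          have h1 : ‖x‖ - ‖y‖ ≤ ‖x - y‖ := norm_sub_norm_le x y
          have h2 : ‖x - y‖ = dist y x := by rw [dist_eq_norm, norm_sub_rev]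
          linarith
        have htb : t ^ b ≤ ‖y‖ ^ b := Real.rpow_le_rpow ht.le hyt hb0.le
        have hV : 1 / (1 + ‖y‖ ^ b) ≤ t ^ (-b) := by
          rw [Real.rpow_neg ht.le, ← one_div]
          apply one_div_le_one_div_of_le (rpow_pos_of_pos ht b)
          linarith
        exact mul_le_mul_of_nonneg_right hV (rpow_nonneg (norm_nonneg _) _)
      have hstep2 : (∫ y in ball x t, t ^ (-b) * ‖x - y‖ ^ ((1:ℝ) - (N:ℝ)))
          = t ^ (-b) * ((N:ℝ) * volB * t) := by
        rw [integral_const_mul, hC2 t ht]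
      have hpow : t ^ ((1:ℝ) - b) = t * t ^ (-b) := by
        rw [show (1:ℝ) - b = 1 + -b by ring, Real.rpow_add ht, Real.rpow_one]
      have hstep3 : t ^ (-b) * ((N:ℝ) * volB * t) = (N:ℝ) * volB * t ^ ((1:ℝ) - b) := by
        rw [hpow]; ring
      have hstep4 : t ^ ((1:ℝ) - b) ≤ 2 ^ (b - 1) * ‖x‖ ^ ((1:ℝ) - (N:ℝ)) := by
        have e1 : t ^ ((1:ℝ) - b) = ‖x‖ ^ ((1:ℝ) - b) * 2 ^ (b - 1) := by
          rw [ht_def, Real.div_rpow (norm_nonneg x) (by norm_num : (0:ℝ) ≤ 2),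
            div_eq_mul_inv, ← Real.rpow_neg (by norm_num : (0:ℝ) ≤ 2), neg_sub]
        have e2 : ‖x‖ ^ ((1:ℝ) - b) ≤ ‖x‖ ^ ((1:ℝ) - (N:ℝ)) :=
          Real.rpow_le_rpow_of_exponent_le hx1 (by linarith)
        calc t ^ ((1:ℝ) - b) = ‖x‖ ^ ((1:ℝ) - b) * 2 ^ (b - 1) := e1
          _ ≤ ‖x‖ ^ ((1:ℝ) - (N:ℝ)) * 2 ^ (b - 1) :=
              mul_le_mul_of_nonneg_right e2 (rpow_nonneg (by norm_num) _)
          _ = 2 ^ (b - 1) * ‖x‖ ^ ((1:ℝ) - (N:ℝ)) := mul_comm _ _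
      calc (∫ y in ball x t, g y) ≤ t ^ (-b) * ((N:ℝ) * volB * t) := by
            rw [← hstep2]; exact hstep1
        _ = (N:ℝ) * volB * t ^ ((1:ℝ) - b) := hstep3
        _ ≤ (N:ℝ) * volB * (2 ^ (b - 1) * ‖x‖ ^ ((1:ℝ) - (N:ℝ))) :=
            mul_le_mul_of_nonneg_left hstep4 (by positivity)
        _ = (N:ℝ) * volB * 2 ^ (b - 1) * ‖x‖ ^ ((1:ℝ) - (N:ℝ)) := by ring
    have hfar : (∫ y in (ball x t)ᶜ, g y)
        ≤ IV * 2 ^ ((N:ℝ) - 1) * ‖x‖ ^ ((1:ℝ) - (N:ℝ)) := by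
      have hstep1 : (∫ y in (ball x t)ᶜ, g y)
          ≤ ∫ y in (ball x t)ᶜ, (1 / (1 + ‖y‖ ^ b)) * t ^ ((1:ℝ) - (N:ℝ)) := by
        refine setIntegral_mono_on hg.integrableOn
          (hVint.mul_const _).integrableOn measurableSet_ball.compl ?_
        intro y hy
        rw [mem_compl_iff, mem_ball, not_lt] at hy
        have hxy : t ≤ ‖x - y‖ := by
          rw [norm_sub_rev, ← dist_eq_norm]
          exact hy
        have hW : ‖x - y‖ ^ ((1:ℝ) - (N:ℝ)) ≤ t ^ ((1:ℝ) - (N:ℝ)) :=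
          Real.rpow_le_rpow_of_nonpos ht hxy (by linarith)
        exact mul_le_mul_of_nonneg_left hW (by positivity)
      have hstep2 : (∫ y in (ball x t)ᶜ, (1 / (1 + ‖y‖ ^ b)) * t ^ ((1:ℝ) - (N:ℝ)))
          ≤ IV * t ^ ((1:ℝ) - (N:ℝ)) := by
        rw [integral_mul_const]
        exact mul_le_mul_of_nonneg_right
          (setIntegral_le_integral hVint (Filter.Eventually.of_forall fun y => by positivity))
          (rpow_nonneg ht.le _)
      have e1 : t ^ ((1:ℝ) - (N:ℝ)) = ‖x‖ ^ ((1:ℝ) - (N:ℝ)) * 2 ^ ((N:ℝ) - 1) := by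
        rw [ht_def, Real.div_rpow (norm_nonneg x) (by norm_num : (0:ℝ) ≤ 2),
          div_eq_mul_inv, ← Real.rpow_neg (by norm_num : (0:ℝ) ≤ 2), neg_sub]
      calc (∫ y in (ball x t)ᶜ, g y) ≤ IV * t ^ ((1:ℝ) - (N:ℝ)) := hstep1.trans hstep2
        _ = IV * 2 ^ ((N:ℝ) - 1) * ‖x‖ ^ ((1:ℝ) - (N:ℝ)) := by rw [e1]; ring
    calc K * ∫ y, g y = K * ((∫ y in ball x t, g y) + (∫ y in (ball x t)ᶜ, g y)) := by
          rw [hsplit_int]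
      _ ≤ K * (((N:ℝ) * volB * 2 ^ (b - 1) * ‖x‖ ^ ((1:ℝ) - (N:ℝ)))
          + (IV * 2 ^ ((N:ℝ) - 1) * ‖x‖ ^ ((1:ℝ) - (N:ℝ)))) :=
          mul_le_mul_of_nonneg_left (add_le_add hnear hfar) hK.le
      _ = K * ((N:ℝ) * volB * 2 ^ (b - 1) + IV * 2 ^ ((N:ℝ) - 1)) * ‖x‖ ^ (1 - (N:ℝ)) := by
          ring
end

section
/- Let N ≥ 3 and b > N. Let V(x) = 1/(1+|x|^b) on ℝ^N. Then there exists a constant C = C(N,b) > 0 such that I₁[(I₁V)²](x) ≤ C·I₁V(x) for all x ∈ ℝ^N, where I₁ denotes the Riesz potential of order 1. -/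
open MeasureTheory Real Set Metric Module Filter
open scoped ENNReal NNReal

noncomputable section

variable {E : Type*} [NormedAddCommGroup E] [NormedSpace ℝ E] [MeasurableSpace E] [BorelSpace E]
  [FiniteDimensional ℝ E] (μ : Measure E) [μ.IsAddHaarMeasure]

theorem aux_integrableOn_rpow (hn : 2 ≤ finrank ℝ E) (R : ℝ) :
    IntegrableOn (fun z : E => ‖z‖ ^ ((1 : ℝ) - finrank ℝ E)) (closedBall 0 R) μ := by
  set n : ℝ := (finrank ℝ E : ℝ) with hn_def
  have hn2 : (2 : ℝ) ≤ n := by simp only [hn_def]; exact_mod_cast hn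
  set p : ℝ := 1 - n with hp_def
  have hp_neg : p < 0 := by simp only [hp_def]; linarith
  have hmeas : Measurable fun z : E => ‖z‖ ^ p := by fun_prop
  refine ⟨hmeas.aestronglyMeasurable.restrict, ?_⟩
  have hnn : ∀ z : E, 0 ≤ ‖z‖ ^ p := fun z => rpow_nonneg (norm_nonneg z) p
  rw [HasFiniteIntegral]
  have hrw : (∫⁻ z in closedBall (0:E) R, ‖(‖z‖ ^ p)‖ₑ ∂μ)
      = ∫⁻ z in closedBall (0:E) R, ENNReal.ofReal (‖z‖ ^ p) ∂μ :=
    lintegral_enorm_of_nonneg fun z => hnn z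
  rw [hrw, lintegral_eq_lintegral_meas_le _ (Eventually.of_forall hnn)
    hmeas.aemeasurable]
  set ν := μ.restrict (closedBall (0:E) R) with hν
  have hsub : ∀ t : ℝ, 0 < t → {a : E | t ≤ ‖a‖ ^ p} ⊆ closedBall 0 (t ^ p⁻¹) := by
    intro t ht a ha
    simp only [mem_setOf_eq] at ha
    have hna : a ≠ 0 := by
      intro h
      rw [h] at ha
      simp only [norm_zero, zero_rpow hp_neg.ne] at ha
      linarith
    have hpos : 0 < ‖a‖ := norm_pos_iff.2 hna
    rw [mem_closedBall_zero_iff]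
    exact (Real.le_rpow_inv_iff_of_neg hpos ht hp_neg).2 ha
  calc
    ∫⁻ t in Ioi (0:ℝ), ν {a : E | t ≤ ‖a‖ ^ p}
        ≤ ∫⁻ t in Ioc (0:ℝ) 1 ∪ Ioi 1, ν {a : E | t ≤ ‖a‖ ^ p} :=
      lintegral_mono_set Ioi_subset_Ioc_union_Ioi
    _ ≤ (∫⁻ t in Ioc (0:ℝ) 1, ν {a : E | t ≤ ‖a‖ ^ p})
        + ∫⁻ t in Ioi (1:ℝ), ν {a : E | t ≤ ‖a‖ ^ p} := lintegral_union_le _ _ _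
    _ < ∞ := by
      refine ENNReal.add_lt_top.2 ⟨?_, ?_⟩
      · calc
          (∫⁻ t in Ioc (0:ℝ) 1, ν {a : E | t ≤ ‖a‖ ^ p})
              ≤ ∫⁻ _ in Ioc (0:ℝ) 1, μ (closedBall (0:E) R) := by
            refine setLIntegral_mono' measurableSet_Ioc fun t ht => ?_
            exact le_trans (measure_mono (subset_univ _)) (le_of_eq (Measure.restrict_apply_univ _))
          _ = μ (closedBall (0:E) R) * volume (Ioc (0:ℝ) 1) := setLIntegral_const _ _
          _ < ∞ := by
            exact ENNReal.mul_lt_top measure_closedBall_lt_top (by simp)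
      · have hq : p⁻¹ * (finrank ℝ E : ℝ) < -1 := by
          rw [hp_def, inv_mul_eq_div, div_lt_iff_of_neg (by linarith : (1:ℝ) - n < 0)]
          simp only [hn_def]; linarith
        calc
          (∫⁻ t in Ioi (1:ℝ), ν {a : E | t ≤ ‖a‖ ^ p})
              ≤ ∫⁻ t in Ioi (1:ℝ),
                ENNReal.ofReal (t ^ (p⁻¹ * (finrank ℝ E : ℝ))) * μ (ball (0:E) 1) := by
            refine setLIntegral_mono' measurableSet_Ioi fun t ht => ?_
            have ht0 : (0:ℝ) < t := lt_trans one_pos ht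
            calc
              ν {a : E | t ≤ ‖a‖ ^ p} ≤ μ {a : E | t ≤ ‖a‖ ^ p} :=
                Measure.restrict_apply_le _ _
              _ ≤ μ (closedBall 0 (t ^ p⁻¹)) := measure_mono (hsub t ht0)
              _ = ENNReal.ofReal ((t ^ p⁻¹) ^ finrank ℝ E) * μ (ball (0:E) 1) :=
                Measure.addHaar_closedBall μ _ (rpow_nonneg ht0.le _)
              _ = ENNReal.ofReal (t ^ (p⁻¹ * (finrank ℝ E : ℝ))) * μ (ball (0:E) 1) := by
                rw [← Real.rpow_natCast (t ^ p⁻¹) (finrank ℝ E), ← Real.rpow_mul ht0.le]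
          _ = (∫⁻ t in Ioi (1:ℝ), ENNReal.ofReal (t ^ (p⁻¹ * (finrank ℝ E : ℝ))))
              * μ (ball (0:E) 1) :=
            lintegral_mul_const' _ _ measure_ball_lt_top.ne
          _ < ∞ := by
            refine ENNReal.mul_lt_top ?_ measure_ball_lt_top
            exact (integrableOn_Ioi_rpow_of_lt hq one_pos).setLIntegral_lt_top

theorem aux_setIntegral_rpow [Nontrivial E] (hn : 2 ≤ finrank ℝ E) {R : ℝ} (hR : 0 ≤ R) :
    ∫ z in closedBall (0:E) R, ‖z‖ ^ ((1 : ℝ) - finrank ℝ E) ∂μ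
      = (finrank ℝ E : ℝ) * (μ (ball (0:E) 1)).toReal * R := by
  set d := finrank ℝ E with hd
  have hd1 : 1 ≤ d := le_trans (by norm_num) hn
  set n : ℝ := (d : ℝ) with hn_def
  set p : ℝ := 1 - n with hp_def
  have key := MeasureTheory.integral_fun_norm_addHaar μ ((Iic R).indicator fun r : ℝ => r ^ p)
  have lhs_eq : (fun x : E => ((Iic R).indicator fun r : ℝ => r ^ p) ‖x‖)
      = (closedBall (0:E) R).indicator fun x : E => ‖x‖ ^ p := by
    funext x
    by_cases hx : ‖x‖ ≤ R
    · rw [Set.indicator_of_mem (by exact hx : ‖x‖ ∈ Iic R),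
        Set.indicator_of_mem (mem_closedBall_zero_iff.2 hx)]
    · rw [Set.indicator_of_notMem (by exact hx : ‖x‖ ∉ Iic R),
        Set.indicator_of_notMem (fun h => hx (mem_closedBall_zero_iff.1 h))]
  rw [lhs_eq, integral_indicator measurableSet_closedBall] at key
  rw [key]
  have inner_eq : (∫ y in Ioi (0:ℝ), y ^ (d - 1) • ((Iic R).indicator fun r : ℝ => r ^ p) y) = R := by
    have step1 : (fun y : ℝ => y ^ (d - 1) • ((Iic R).indicator fun r : ℝ => r ^ p) y)
        = (Iic R).indicator fun y : ℝ => y ^ (d - 1) * y ^ p := by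
      funext y
      rw [smul_eq_mul]
      by_cases hy : y ∈ Iic R
      · rw [Set.indicator_of_mem hy, Set.indicator_of_mem hy]
      · rw [Set.indicator_of_notMem hy, Set.indicator_of_notMem hy, mul_zero]
    rw [step1, setIntegral_indicator measurableSet_Iic, Ioi_inter_Iic]
    have step2 : ∫ y in Ioc (0:ℝ) R, y ^ (d - 1) * y ^ p
        = ∫ y in Ioc (0:ℝ) R, (1:ℝ) := by
      refine setIntegral_congr_fun measurableSet_Ioc fun y hy => ?_
      have hy0 : 0 < y := hy.1
      rw [← Real.rpow_natCast y (d - 1), ← Real.rpow_add hy0]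
      have : ((d - 1 : ℕ) : ℝ) + p = 0 := by
        rw [Nat.cast_sub hd1, hp_def, hn_def]
        push_cast
        ring
      rw [this, Real.rpow_zero]
    rw [step2]
    simp [hR]
  rw [inner_eq, nsmul_eq_mul, smul_eq_mul, measureReal_def]; ring

theorem aux_kernel_closedBall [Nontrivial E] (hn : 2 ≤ finrank ℝ E) (x : E) {R : ℝ} (hR : 0 ≤ R) :
    IntegrableOn (fun z : E => ‖x - z‖ ^ ((1 : ℝ) - finrank ℝ E)) (closedBall x R) μ ∧
    ∫ z in closedBall x R, ‖x - z‖ ^ ((1 : ℝ) - finrank ℝ E) ∂μ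
      = (finrank ℝ E : ℝ) * (μ (ball (0:E) 1)).toReal * R := by
  set p : ℝ := 1 - (finrank ℝ E : ℝ) with hp_def
  have hT : MeasurePreserving (fun t : E => x - t) μ μ := Measure.measurePreserving_sub_left μ x
  have hTemb : MeasurableEmbedding (fun t : E => x - t) :=
    (MeasurableEquiv.subLeft x).measurableEmbedding
  have himg : (fun t : E => x - t) '' closedBall 0 R = closedBall x R := by
    ext z
    constructor
    · rintro ⟨w, hw, rfl⟩
      rw [mem_closedBall_zero_iff] at hw
      rw [mem_closedBall, dist_eq_norm]
      simpa using hw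
    · intro hz
      refine ⟨x - z, ?_, sub_sub_cancel x z⟩
      rw [mem_closedBall_zero_iff]
      rw [mem_closedBall, dist_eq_norm] at hz
      rwa [norm_sub_rev]
  have hcomp : ((fun z : E => ‖x - z‖ ^ p) ∘ fun t : E => x - t) = fun w : E => ‖w‖ ^ p := by
    funext w; simp
  constructor
  · rw [← himg, hT.integrableOn_image hTemb, hcomp]
    exact aux_integrableOn_rpow μ hn R
  · rw [← himg, hT.setIntegral_image_emb hTemb]
    calc ∫ w in closedBall (0:E) R, ‖x - (x - w)‖ ^ p ∂μ
        = ∫ w in closedBall (0:E) R, ‖w‖ ^ p ∂μ := by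
          refine setIntegral_congr_fun measurableSet_closedBall fun w _ => ?_
          simp
      _ = _ := aux_setIntegral_rpow μ hn hR

theorem aux_riesz_bound [Nontrivial E] (hn : 3 ≤ finrank ℝ E) {a : ℝ}
    (ha : (finrank ℝ E : ℝ) < a) :
    ∃ C : ℝ, 0 < C ∧ ∀ x : E,
      Integrable (fun z : E => (max 1 ‖z‖) ^ (-a) * ‖x - z‖ ^ ((1 : ℝ) - finrank ℝ E)) μ ∧
      ∫ z, (max 1 ‖z‖) ^ (-a) * ‖x - z‖ ^ ((1 : ℝ) - finrank ℝ E) ∂μ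
        ≤ C * (max 1 ‖x‖) ^ ((1 : ℝ) - finrank ℝ E) := by
  have hn3 : (3:ℝ) ≤ (finrank ℝ E : ℝ) := by exact_mod_cast hn
  set n : ℝ := (finrank ℝ E : ℝ) with hn_def
  set p : ℝ := 1 - n with hp_def
  have hp1 : p ≤ 0 := by simp only [hp_def]; linarith
  have ha0 : 0 < a := by linarith
  set g : E → ℝ := fun z => (max 1 ‖z‖) ^ (-a) with hg_def
  have hg_meas : Measurable g := by
    simp only [hg_def]
    fun_prop
  have hg_nonneg : ∀ z, 0 ≤ g z := fun z => rpow_nonneg (le_trans zero_le_one (le_max_left _ _)) _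
  have hg_le_one : ∀ z, g z ≤ 1 := fun z =>
    rpow_le_one_of_one_le_of_nonpos (le_max_left _ _) (by linarith)
  have hg_int : Integrable g μ := by
    have hdom : Integrable (fun z : E => (2:ℝ)^a * (1+‖z‖)^(-a)) μ :=
      (integrable_one_add_norm ha).const_mul _
    refine hdom.mono' hg_meas.aestronglyMeasurable (Eventually.of_forall fun z => ?_)
    rw [Real.norm_eq_abs, abs_of_nonneg (hg_nonneg z)]
    have h1 : (1:ℝ) + ‖z‖ ≤ 2 * max 1 ‖z‖ := by
      have h2 := le_max_left 1 ‖z‖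
      have h3 := le_max_right 1 ‖z‖
      linarith
    have hbase : (0:ℝ) < (1 + ‖z‖)/2 := by positivity
    calc g z ≤ ((1+‖z‖)/2)^(-a) :=
          rpow_le_rpow_of_nonpos hbase (by linarith) (by linarith)
      _ = (1+‖z‖)^(-a) / (2:ℝ)^(-a) := Real.div_rpow (by positivity) (by norm_num) _
      _ = (2:ℝ)^a * (1+‖z‖)^(-a) := by
          rw [Real.rpow_neg (by norm_num : (0:ℝ) ≤ 2), div_eq_mul_inv, inv_inv, mul_comm]
  set mB : ℝ := (μ (ball (0:E) 1)).toReal with hmB_def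
  have hmB : 0 < mB :=
    ENNReal.toReal_pos (ne_of_gt (measure_ball_pos μ 0 one_pos)) measure_ball_lt_top.ne
  set Ia : ℝ := ∫ z, g z ∂μ with hIa_def
  have hIa : 0 ≤ Ia := integral_nonneg hg_nonneg
  have hn0 : 0 < n := by linarith
  set C0 : ℝ := n * mB + Ia with hC0_def
  have hC0 : 0 < C0 := by positivity
  refine ⟨C0 * (2:ℝ)^(n-1), by positivity, fun x => ?_⟩
  set R : ℝ := max 1 (‖x‖/2) with hR_def
  have hR1 : (1:ℝ) ≤ R := le_max_left _ _
  have hR0 : (0:ℝ) < R := lt_of_lt_of_le one_pos hR1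
  have hk_nonneg : ∀ z : E, 0 ≤ ‖x - z‖ ^ p := fun z => rpow_nonneg (norm_nonneg _) _
  have hgR : ∀ z ∈ closedBall x R, g z ≤ R ^ (-a) := by
    intro z hz
    have hmz : R ≤ max 1 ‖z‖ := by
      rcases le_or_gt ‖x‖ 2 with h2|h2
      · have hr1 : R = 1 := max_eq_left (by linarith)
        rw [hr1]; exact le_max_left _ _
      · have hRx : R = ‖x‖/2 := max_eq_right (by linarith)
        have hns : ‖x‖ - ‖z‖ ≤ ‖x - z‖ := norm_sub_norm_le x z
        have hdist : ‖x - z‖ ≤ R := by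
          rw [mem_closedBall, dist_eq_norm] at hz
          rwa [norm_sub_rev]
        have : R ≤ ‖z‖ := by rw [hRx] at hdist ⊢; linarith
        exact le_trans this (le_max_right _ _)
    exact rpow_le_rpow_of_nonpos hR0 hmz (by linarith)
  have hxz_out : ∀ z ∈ (closedBall x R)ᶜ, R ≤ ‖x - z‖ := by
    intro z hz
    rw [mem_compl_iff, mem_closedBall, dist_eq_norm, not_le] at hz
    rw [norm_sub_rev]
    exact hz.le
  obtain ⟨kint, kval⟩ := aux_kernel_closedBall μ (by omega : 2 ≤ finrank ℝ E) x hR0.le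
  set f : E → ℝ := fun z => g z * ‖x - z‖ ^ p with hf_def
  have hf_meas : Measurable f := by
    simp only [hf_def]
    refine hg_meas.mul ?_
    fun_prop
  have hf_nonneg : ∀ z, 0 ≤ f z := fun z => mul_nonneg (hg_nonneg z) (hk_nonneg z)
  have hint1 : IntegrableOn f (closedBall x R) μ := by
    refine kint.mono' hf_meas.aestronglyMeasurable.restrict (Eventually.of_forall fun z => ?_)
    rw [Real.norm_eq_abs, abs_of_nonneg (hf_nonneg z)]
    calc f z ≤ 1 * ‖x - z‖ ^ p := mul_le_mul_of_nonneg_right (hg_le_one z) (hk_nonneg z)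
      _ = ‖x - z‖ ^ p := one_mul _
  have hint2 : IntegrableOn f (closedBall x R)ᶜ μ := by
    refine hg_int.restrict.mono' hf_meas.aestronglyMeasurable.restrict
      ((ae_restrict_iff' measurableSet_closedBall.compl).2 (Eventually.of_forall fun z hz => ?_))
    rw [Real.norm_eq_abs, abs_of_nonneg (hf_nonneg z)]
    have hk1 : ‖x - z‖ ^ p ≤ 1 :=
      le_trans (rpow_le_rpow_of_nonpos hR0 (hxz_out z hz) hp1)
        (rpow_le_one_of_one_le_of_nonpos hR1 hp1)
    calc f z ≤ g z * 1 := mul_le_mul_of_nonneg_left hk1 (hg_nonneg z)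
      _ = g z := mul_one _
  have hf_int : Integrable f μ := by
    rw [← integrableOn_univ, ← union_compl_self (closedBall x R)]
    exact hint1.union hint2
  refine ⟨hf_int, ?_⟩
  have hsplit : ∫ z, f z ∂μ
      = (∫ z in closedBall x R, f z ∂μ) + ∫ z in (closedBall x R)ᶜ, f z ∂μ :=
    (integral_add_compl measurableSet_closedBall hf_int).symm
  have hpart1 : ∫ z in closedBall x R, f z ∂μ ≤ n * mB * R ^ p := by
    calc ∫ z in closedBall x R, f z ∂μ
        ≤ ∫ z in closedBall x R, R^(-a) * ‖x - z‖^p ∂μ := by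
          refine setIntegral_mono_on hint1 (kint.const_mul _) measurableSet_closedBall
            fun z hz => mul_le_mul_of_nonneg_right (hgR z hz) (hk_nonneg z)
      _ = R^(-a) * ∫ z in closedBall x R, ‖x - z‖^p ∂μ := integral_const_mul _ _
      _ = n * mB * (R^(-a) * R^(1:ℝ)) := by rw [kval, rpow_one]; ring
      _ = n * mB * R^(-a+1) := by rw [← Real.rpow_add hR0]
      _ ≤ n * mB * R^p := by
          refine mul_le_mul_of_nonneg_left (rpow_le_rpow_of_exponent_le hR1 ?_) (by positivity)
          simp only [hp_def, hn_def]; linarith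
  have hpart2 : ∫ z in (closedBall x R)ᶜ, f z ∂μ ≤ R^p * Ia := by
    calc ∫ z in (closedBall x R)ᶜ, f z ∂μ
        ≤ ∫ z in (closedBall x R)ᶜ, R^p * g z ∂μ := by
          refine setIntegral_mono_on hint2 (hg_int.const_mul _).restrict
            measurableSet_closedBall.compl fun z hz => ?_
          calc f z ≤ g z * R^p :=
                mul_le_mul_of_nonneg_left
                  (rpow_le_rpow_of_nonpos hR0 (hxz_out z hz) hp1) (hg_nonneg z)
            _ = R^p * g z := mul_comm _ _
      _ = R^p * ∫ z in (closedBall x R)ᶜ, g z ∂μ := integral_const_mul _ _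
      _ ≤ R^p * Ia := by
          refine mul_le_mul_of_nonneg_left ?_ (rpow_nonneg hR0.le _)
          exact setIntegral_le_integral hg_int (Eventually.of_forall hg_nonneg)
  have htot : ∫ z, f z ∂μ ≤ C0 * R^p := by
    rw [hsplit, hC0_def]
    have := hpart1
    have := hpart2
    ring_nf
    nlinarith [rpow_nonneg hR0.le p]
  have hmaxx : (max 1 ‖x‖)/2 ≤ R := by
    rw [div_le_iff₀ (by norm_num : (0:ℝ) < 2)]
    refine max_le (by linarith) ?_
    have := le_max_right 1 (‖x‖/2)
    linarith
  have hRp : R^p ≤ (2:ℝ)^(n-1) * (max 1 ‖x‖)^p := by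
    have hbase : (0:ℝ) < (max 1 ‖x‖)/2 := by positivity
    have h2p : (2:ℝ)^p = ((2:ℝ)^(n-1))⁻¹ := by
      rw [show p = -(n-1) by simp only [hp_def]; ring, Real.rpow_neg (by norm_num : (0:ℝ) ≤ 2)]
    calc R^p ≤ ((max 1 ‖x‖)/2)^p := rpow_le_rpow_of_nonpos hbase hmaxx hp1
      _ = (max 1 ‖x‖)^p / (2:ℝ)^p := Real.div_rpow (by positivity) (by norm_num) _
      _ = (2:ℝ)^(n-1) * (max 1 ‖x‖)^p := by rw [h2p, div_eq_mul_inv, inv_inv, mul_comm]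
  calc ∫ z, f z ∂μ ≤ C0 * R^p := htot
    _ ≤ C0 * ((2:ℝ)^(n-1) * (max 1 ‖x‖)^p) := mul_le_mul_of_nonneg_left hRp hC0.le
    _ = C0 * (2:ℝ)^(n-1) * (max 1 ‖x‖)^p := by ring

end

/-- For `N ≥ 3`, `b > N`, `V x = 1/(1+|x|^b)`, there is
`C = C(N,b) > 0` with `I₁[(I₁V)²](x) ≤ C · I₁V(x)` for all `x ∈ ℝ^N`,
where `I₁ f(x) = c(N,1) ∫ f(y)/|x-y|^(N-1) dy`. -/
theorem stmt4 (N : ℕ) (hN : 3 ≤ N) (b : ℝ) (hb : (N : ℝ) < b) :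
    ∃ C : ℝ, 0 < C ∧
      ∀ x : EuclideanSpace ℝ (Fin N),
        (Real.Gamma (((N : ℝ) - 1) / 2) /
            (π ^ ((N : ℝ) / 2) * 2 * Real.Gamma (1 / 2))) *
          (∫ z : EuclideanSpace ℝ (Fin N),
            (((Real.Gamma (((N : ℝ) - 1) / 2) /
                (π ^ ((N : ℝ) / 2) * 2 * Real.Gamma (1 / 2))) *
              ∫ y : EuclideanSpace ℝ (Fin N),
                (1 / (1 + ‖y‖ ^ b)) / ‖z - y‖ ^ ((N : ℝ) - 1)) ^ 2) /
              ‖x - z‖ ^ ((N : ℝ) - 1)) ≤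
        C * ((Real.Gamma (((N : ℝ) - 1) / 2) /
              (π ^ ((N : ℝ) / 2) * 2 * Real.Gamma (1 / 2))) *
            ∫ y : EuclideanSpace ℝ (Fin N),
              (1 / (1 + ‖y‖ ^ b)) / ‖x - y‖ ^ ((N : ℝ) - 1)) := by
  classical
  have hfr : finrank ℝ (EuclideanSpace ℝ (Fin N)) = N := finrank_euclideanSpace_fin
  haveI : Nontrivial (EuclideanSpace ℝ (Fin N)) :=
    nontrivial_of_finrank_pos (R := ℝ) (by rw [hfr]; omega)
  set μ : Measure (EuclideanSpace ℝ (Fin N)) := volume with hmu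
  have hN3 : (3:ℝ) ≤ (N:ℝ) := by exact_mod_cast hN
  set K : ℝ := Real.Gamma (((N : ℝ) - 1) / 2) /
      (π ^ ((N : ℝ) / 2) * 2 * Real.Gamma (1 / 2)) with hK_def
  have hK : 0 < K := by
    apply div_pos
    · exact Real.Gamma_pos_of_pos (by linarith)
    · have h1 : (0:ℝ) < π ^ ((N:ℝ)/2) := rpow_pos_of_pos pi_pos _
      have h2 : 0 < Real.Gamma (1/2) := Real.Gamma_pos_of_pos (by norm_num)
      positivity
  set p : ℝ := 1 - (N:ℝ) with hp_def
  have hp1 : p ≤ 0 := by simp only [hp_def]; linarith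
  have hdiv : ∀ (c r : ℝ), 0 ≤ r → c / r ^ ((N:ℝ)-1) = c * r ^ p := by
    intro c r hr
    rcases eq_or_lt_of_le hr with h|h
    · rw [← h, Real.zero_rpow (by linarith : (N:ℝ)-1 ≠ 0),
        Real.zero_rpow (by simp only [hp_def]; intro hc; linarith : p ≠ 0), div_zero, mul_zero]
    · rw [show p = -((N:ℝ)-1) by simp only [hp_def]; ring, Real.rpow_neg h.le, div_eq_mul_inv]
  set V : EuclideanSpace ℝ (Fin N) → ℝ := fun y => 1/(1+‖y‖^b) with hV_def
  have hV_nonneg : ∀ y, 0 ≤ V y := by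
    intro y
    have h0 : (0:ℝ) ≤ ‖y‖ ^ b := rpow_nonneg (norm_nonneg _) _
    have : (0:ℝ) < 1 + ‖y‖ ^ b := by linarith
    positivity
  have hV_le : ∀ y, V y ≤ (max 1 ‖y‖)^(-b) := by
    intro y
    have h1 : (max 1 ‖y‖)^b ≤ 1 + ‖y‖^b := by
      rcases le_total ‖y‖ 1 with h|h
      · rw [max_eq_left h, Real.one_rpow]
        have := rpow_nonneg (norm_nonneg y) b
        linarith
      · rw [max_eq_right h]
        linarith
    have hpos : (0:ℝ) < (max 1 ‖y‖)^b :=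
      rpow_pos_of_pos (lt_of_lt_of_le one_pos (le_max_left _ _)) _
    have h2 := one_div_le_one_div_of_le hpos h1
    rw [Real.rpow_neg (le_trans zero_le_one (le_max_left _ _)), ← one_div]
    exact h2
  obtain ⟨Cb, hCb, hBb⟩ := aux_riesz_bound μ (by rw [hfr]; omega) (a := b) (by rw [hfr]; exact hb)
  obtain ⟨C2, hC2, hB2⟩ := aux_riesz_bound μ (by rw [hfr]; omega) (a := 2*(N:ℝ) - 2)
    (by rw [hfr]; push_cast; linarith)
  simp only [hfr] at hBb hB2
  set J : EuclideanSpace ℝ (Fin N) → ℝ := fun z => ∫ y, V y * ‖z - y‖ ^ p ∂μ with hJ_def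
  have hJ_nonneg : ∀ z, 0 ≤ J z := fun z =>
    integral_nonneg fun y => mul_nonneg (hV_nonneg y) (rpow_nonneg (norm_nonneg _) _)
  have hV_meas : Measurable V := by
    simp only [hV_def]
    fun_prop
  have hJint : ∀ x, Integrable (fun y => V y * ‖x - y‖ ^ p) μ := by
    intro x
    refine (hBb x).1.mono' ((hV_meas.mul (by fun_prop)).aestronglyMeasurable)
      (Eventually.of_forall fun y => ?_)
    rw [Real.norm_eq_abs,
      abs_of_nonneg (mul_nonneg (hV_nonneg y) (rpow_nonneg (norm_nonneg _) _))]
    exact mul_le_mul_of_nonneg_right (hV_le y) (rpow_nonneg (norm_nonneg _) _)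
  have hJ_le : ∀ z, J z ≤ Cb * (max 1 ‖z‖) ^ p := by
    intro z
    refine le_trans (integral_mono_of_nonneg
      (Eventually.of_forall fun y => mul_nonneg (hV_nonneg y) (rpow_nonneg (norm_nonneg _) _))
      (hBb z).1
      (Eventually.of_forall fun y =>
        mul_le_mul_of_nonneg_right (hV_le y) (rpow_nonneg (norm_nonneg _) _))) (hBb z).2
  set m : ℝ := (μ (closedBall (0:EuclideanSpace ℝ (Fin N)) 1)).toReal * (2:ℝ)^p / 2 with hm_def
  have hm : 0 < m := by
    have h1 : 0 < (μ (closedBall (0:EuclideanSpace ℝ (Fin N)) 1)).toReal :=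
      ENNReal.toReal_pos (measure_closedBall_pos μ 0 one_pos).ne' measure_closedBall_lt_top.ne
    have h2 : (0:ℝ) < (2:ℝ)^p := rpow_pos_of_pos two_pos _
    positivity
  have hJ_low : ∀ x, m * (max 1 ‖x‖) ^ p ≤ J x := by
    intro x
    have hAe : ∀ᵐ y ∂μ, y ≠ x := by
      rw [ae_iff]
      have hset : {y : EuclideanSpace ℝ (Fin N) | ¬ y ≠ x} = {x} := by ext y; simp
      rw [hset]
      exact measure_singleton x
    have hle : (fun _ : EuclideanSpace ℝ (Fin N) => (1:ℝ)/2 * ((2 * max 1 ‖x‖) ^ p))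
        ≤ᵐ[μ.restrict (closedBall 0 1)] fun y => V y * ‖x - y‖ ^ p := by
      refine (ae_restrict_iff' measurableSet_closedBall).2 ?_
      filter_upwards [hAe] with y hy hy1
      have h1 : ‖y‖ ≤ 1 := mem_closedBall_zero_iff.1 hy1
      have hVy : (1:ℝ)/2 ≤ V y := by
        have hb1 : ‖y‖^b ≤ 1 := Real.rpow_le_one (norm_nonneg y) h1 (by linarith)
        have hpos : (0:ℝ) < 1 + ‖y‖^b := by
          have := rpow_nonneg (norm_nonneg y) b; linarith
        have := one_div_le_one_div_of_le hpos (by linarith : 1 + ‖y‖^b ≤ 2)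
        simpa [hV_def] using this
      have hxy0 : (0:ℝ) < ‖x - y‖ := by
        rw [norm_pos_iff, sub_ne_zero]
        exact Ne.symm hy
      have hxy2 : ‖x - y‖ ≤ 2 * max 1 ‖x‖ := by
        have h4 := norm_sub_le x y
        have h2 := le_max_right 1 ‖x‖
        have h3 := le_max_left 1 ‖x‖
        linarith
      have hk : (2 * max 1 ‖x‖) ^ p ≤ ‖x - y‖ ^ p := rpow_le_rpow_of_nonpos hxy0 hxy2 hp1
      exact mul_le_mul hVy hk (rpow_nonneg (by positivity) _) (hV_nonneg y)
    have hmono := integral_mono_ae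
      (integrableOn_const (C := (1:ℝ)/2 * ((2 * max 1 ‖x‖) ^ p)) measure_closedBall_lt_top.ne) (hJint x).integrableOn hle
    rw [setIntegral_const, smul_eq_mul] at hmono
    have hsub : ∫ y in closedBall (0:EuclideanSpace ℝ (Fin N)) 1, V y * ‖x - y‖ ^ p ∂μ ≤ J x :=
      setIntegral_le_integral (hJint x)
        (Eventually.of_forall fun y => mul_nonneg (hV_nonneg y) (rpow_nonneg (norm_nonneg _) _))
    have hmul : ((2:ℝ) * max 1 ‖x‖) ^ p = 2^p * (max 1 ‖x‖)^p :=
      Real.mul_rpow (by norm_num) (by positivity)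
    calc m * (max 1 ‖x‖)^p
        = (μ (closedBall (0:EuclideanSpace ℝ (Fin N)) 1)).toReal
          * ((1:ℝ)/2 * ((2 * max 1 ‖x‖) ^ p)) := by rw [hmul, hm_def]; ring
      _ ≤ ∫ y in closedBall (0:EuclideanSpace ℝ (Fin N)) 1, V y * ‖x - y‖ ^ p ∂μ := hmono
      _ ≤ J x := hsub
  refine ⟨K^2 * Cb^2 * C2 / m, by positivity, fun x => ?_⟩
  have hinner : ∀ z : EuclideanSpace ℝ (Fin N),
      (∫ y : EuclideanSpace ℝ (Fin N), (1 / (1 + ‖y‖ ^ b)) / ‖z - y‖ ^ ((N : ℝ) - 1)) = J z := by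
    intro z
    refine integral_congr_ae (Eventually.of_forall fun y => ?_)
    exact hdiv _ _ (norm_nonneg _)
  have hout_le : ∫ z, (K * J z)^2 * ‖x - z‖ ^ p ∂μ ≤ K^2*Cb^2*C2 * (max 1 ‖x‖)^p := by
    have hptw : ∀ z : EuclideanSpace ℝ (Fin N),
        (K * J z)^2 * ‖x - z‖^p
          ≤ K^2*Cb^2 * ((max 1 ‖z‖)^(-(2*(N:ℝ)-2)) * ‖x - z‖^p) := by
      intro z
      have hJz : (J z)^2 ≤ Cb^2 * (max 1 ‖z‖)^(-(2*(N:ℝ)-2)) := by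
        have h1 : (J z)^2 ≤ (Cb * (max 1 ‖z‖)^p)^2 :=
          pow_le_pow_left₀ (hJ_nonneg z) (hJ_le z) 2
        have h2 : ((max 1 ‖z‖)^p)^2 = (max 1 ‖z‖)^(-(2*(N:ℝ)-2)) := by
          rw [← Real.rpow_natCast ((max 1 ‖z‖)^p) 2, ← Real.rpow_mul (by positivity)]
          congr 1
          push_cast
          simp only [hp_def]
          ring
        calc (J z)^2 ≤ (Cb * (max 1 ‖z‖)^p)^2 := h1
          _ = Cb^2 * ((max 1 ‖z‖)^p)^2 := by ring
          _ = Cb^2 * (max 1 ‖z‖)^(-(2*(N:ℝ)-2)) := by rw [h2]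
      calc (K * J z)^2 * ‖x-z‖^p = K^2 * (J z)^2 * ‖x-z‖^p := by ring
        _ ≤ K^2 * (Cb^2 * (max 1 ‖z‖)^(-(2*(N:ℝ)-2))) * ‖x-z‖^p :=
            mul_le_mul_of_nonneg_right (mul_le_mul_of_nonneg_left hJz (by positivity))
              (rpow_nonneg (norm_nonneg _) _)
        _ = K^2*Cb^2 * ((max 1 ‖z‖)^(-(2*(N:ℝ)-2)) * ‖x - z‖^p) := by ring
    calc ∫ z, (K*J z)^2 * ‖x-z‖^p ∂μ
        ≤ ∫ z, K^2*Cb^2 * ((max 1 ‖z‖)^(-(2*(N:ℝ)-2)) * ‖x-z‖^p) ∂μ :=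
          integral_mono_of_nonneg
            (Eventually.of_forall fun z =>
              mul_nonneg (sq_nonneg _) (rpow_nonneg (norm_nonneg _) _))
            ((hB2 x).1.const_mul _) (Eventually.of_forall hptw)
      _ = K^2*Cb^2 * ∫ z, (max 1 ‖z‖)^(-(2*(N:ℝ)-2)) * ‖x-z‖^p ∂μ := integral_const_mul _ _
      _ ≤ K^2*Cb^2 * (C2 * (max 1 ‖x‖)^p) :=
          mul_le_mul_of_nonneg_left (hB2 x).2 (by positivity)
      _ = K^2*Cb^2*C2 * (max 1 ‖x‖)^p := by ring
  have hLHS_eq : (∫ z : EuclideanSpace ℝ (Fin N),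
      ((K * ∫ y : EuclideanSpace ℝ (Fin N), (1/(1+‖y‖^b)) / ‖z-y‖^((N:ℝ)-1)) ^ 2)
        / ‖x - z‖ ^ ((N:ℝ)-1))
      = ∫ z, (K * J z)^2 * ‖x - z‖^p ∂μ := by
    refine integral_congr_ae (Eventually.of_forall fun z => ?_)
    beta_reduce
    rw [hinner z, hdiv _ _ (norm_nonneg _)]
  calc K * (∫ z : EuclideanSpace ℝ (Fin N),
      ((K * ∫ y : EuclideanSpace ℝ (Fin N), (1/(1+‖y‖^b)) / ‖z-y‖^((N:ℝ)-1)) ^ 2)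
        / ‖x - z‖ ^ ((N:ℝ)-1))
      = K * ∫ z, (K*J z)^2 * ‖x-z‖^p ∂μ := by rw [hLHS_eq]
    _ ≤ K * (K^2*Cb^2*C2 * (max 1 ‖x‖)^p) := mul_le_mul_of_nonneg_left hout_le hK.le
    _ = (K^2*Cb^2*C2/m) * (K * (m * (max 1 ‖x‖)^p)) := by field_simp
    _ ≤ (K^2*Cb^2*C2/m) * (K * J x) := by
        refine mul_le_mul_of_nonneg_left
          (mul_le_mul_of_nonneg_left (hJ_low x) hK.le) (by positivity)
    _ = (K^2*Cb^2*C2/m) * (K * ∫ y : EuclideanSpace ℝ (Fin N),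
          (1/(1+‖y‖^b)) / ‖x-y‖^((N:ℝ)-1)) := by rw [hinner x]
end

section
/- Let N ≥ 3, b > N, and V(x) = 1/(1+|x|^b). Set g(x) = min(1, |x|^{1-N}) (the asymptotic profile of I₁V). Then there exists C > 0 such that for all |x| > 1, ∫_{ℝ^N} g(y)²/|x-y|^{N-1} dy ≤ C·|x|^{1-N}. -/
open MeasureTheory Real

open Set Metric

lemma aux_int_ball (N : ℕ) (hN : 3 ≤ N) {R : ℝ} (hR : 0 < R) :
    IntegrableOn (fun z : EuclideanSpace ℝ (Fin N) => ‖z‖ ^ (1 - (N:ℝ))) (Metric.ball 0 R) := by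
  have hfin : Module.finrank ℝ (EuclideanSpace ℝ (Fin N)) = N := by simp [finrank_euclideanSpace]
  have hn3 : (3:ℝ) ≤ (N:ℝ) := by exact_mod_cast hN
  have hne : (1 : ℝ) - N ≠ 0 := by linarith
  set f : EuclideanSpace ℝ (Fin N) → ℝ := fun z => ‖z‖ ^ (1 - (N:ℝ)) with hf
  have hmeas : Measurable f := by fun_prop
  have hnn : ∀ z, 0 ≤ f z := fun z => rpow_nonneg (norm_nonneg _) _
  constructor
  · exact (hmeas.aestronglyMeasurable).restrict
  · rw [hasFiniteIntegral_iff_ofReal (ae_of_all _ hnn)]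
    rw [lintegral_eq_lintegral_meas_le _ (ae_of_all _ hnn) hmeas.aemeasurable.restrict]
    have hsub : ∀ t : ℝ, 0 < t → {z : EuclideanSpace ℝ (Fin N) | t ≤ f z} ⊆
        Metric.closedBall 0 (t ^ (1 - (N:ℝ))⁻¹) := by
      intro t ht z hz
      simp only [mem_setOf_eq, hf] at hz
      have hz0 : z ≠ 0 := by
        rintro rfl
        rw [norm_zero, Real.zero_rpow hne] at hz; linarith
      have h2 : (‖z‖ ^ (1 - (N:ℝ))) ^ (1 - (N:ℝ))⁻¹ ≤ t ^ (1 - (N:ℝ))⁻¹ := by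
        apply rpow_le_rpow_of_nonpos ht hz
        rw [inv_nonpos]; linarith
      exact mem_closedBall_zero_iff.mpr
        (by rwa [Real.rpow_rpow_inv (norm_nonneg z) hne] at h2)
    have key : ∀ t ∈ Ioi (0:ℝ),
        (volume.restrict (Metric.ball (0:EuclideanSpace ℝ (Fin N)) R)) {z | t ≤ f z} ≤
          min (volume (Metric.ball (0:EuclideanSpace ℝ (Fin N)) R))
            (ENNReal.ofReal ((t ^ (1 - (N:ℝ))⁻¹) ^ N)
              * volume (Metric.ball (0:EuclideanSpace ℝ (Fin N)) 1)) := by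
      intro t ht
      refine le_min ?_ ?_
      · exact le_trans (measure_mono (subset_univ _))
          (le_of_eq (Measure.restrict_apply_univ _))
      · calc (volume.restrict (Metric.ball (0:EuclideanSpace ℝ (Fin N)) R)) {z | t ≤ f z}
            ≤ volume {z : EuclideanSpace ℝ (Fin N) | t ≤ f z} := Measure.restrict_le_self _
          _ ≤ volume (Metric.closedBall 0 (t ^ (1 - (N:ℝ))⁻¹)) := measure_mono (hsub t ht)
          _ = _ := by
              rw [Measure.addHaar_closedBall _ _ (rpow_nonneg ht.le _), hfin]
    calc ∫⁻ t in Ioi (0:ℝ),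
          (volume.restrict (Metric.ball (0:EuclideanSpace ℝ (Fin N)) R)) {z | t ≤ f z}
        ≤ ∫⁻ t in Ioi (0:ℝ), min (volume (Metric.ball (0:EuclideanSpace ℝ (Fin N)) R))
            (ENNReal.ofReal ((t ^ (1 - (N:ℝ))⁻¹) ^ N)
              * volume (Metric.ball (0:EuclideanSpace ℝ (Fin N)) 1)) :=
          setLIntegral_mono' measurableSet_Ioi key
      _ < ⊤ := by
          refine lt_of_le_of_lt (lintegral_mono_set (Ioi_subset_Ioc_union_Ioi (b := 1))) ?_
          refine lt_of_le_of_lt (lintegral_union_le _ _ _) (ENNReal.add_lt_top.2 ⟨?_, ?_⟩)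
          · refine lt_of_le_of_lt (setLIntegral_mono' measurableSet_Ioc
              (fun t _ => min_le_left _ _)) ?_
            rw [setLIntegral_const]
            exact ENNReal.mul_lt_top measure_ball_lt_top (by simp)
          · refine lt_of_le_of_lt (setLIntegral_mono' measurableSet_Ioi
              (fun t _ => min_le_right _ _)) ?_
            have : ∀ t ∈ Ioi (1:ℝ),
                ENNReal.ofReal ((t ^ (1 - (N:ℝ))⁻¹) ^ N) = ENNReal.ofReal (t ^ ((N:ℝ) * (1 - (N:ℝ))⁻¹)) := by
              intro t ht
              congr 1
              rw [← Real.rpow_natCast (t ^ (1 - (N:ℝ))⁻¹) N, ← Real.rpow_mul (le_of_lt (lt_trans zero_lt_one ht)), mul_comm]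
            rw [setLIntegral_congr_fun measurableSet_Ioi
              (fun t ht => by rw [this t ht])]
            rw [lintegral_mul_const' _ _ measure_ball_lt_top.ne]
            refine ENNReal.mul_lt_top ?_ measure_ball_lt_top
            refine IntegrableOn.setLIntegral_lt_top ?_
            refine integrableOn_Ioi_rpow_of_lt ?_ zero_lt_one
            rw [← div_eq_mul_inv, div_lt_iff_of_neg (by linarith : (1:ℝ) - N < 0)]
            linarith

lemma aux_ball_value (N : ℕ) (hN : 3 ≤ N) {R : ℝ} (hR : 0 < R) :
    ∫ z : EuclideanSpace ℝ (Fin N) in Metric.ball 0 R, ‖z‖ ^ (1 - (N:ℝ)) =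
      (N : ℝ) * (volume (Metric.ball (0:EuclideanSpace ℝ (Fin N)) 1)).toReal * R := by
  have hfin : Module.finrank ℝ (EuclideanSpace ℝ (Fin N)) = N := by simp [finrank_euclideanSpace]
  haveI : Nontrivial (EuclideanSpace ℝ (Fin N)) :=
    Module.nontrivial_of_finrank_pos (by rw [hfin]; omega)
  have hne : (1 : ℝ) - N ≠ 0 := by
    have : (3:ℝ) ≤ (N:ℝ) := by exact_mod_cast hN
    linarith
  set f : ℝ → ℝ := (Set.Ioo 0 R).indicator (fun r => r ^ (1 - (N:ℝ))) with hf
  have h1 : ∀ z : EuclideanSpace ℝ (Fin N),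
      (Metric.ball (0:EuclideanSpace ℝ (Fin N)) R).indicator
        (fun z => ‖z‖ ^ (1 - (N:ℝ))) z = f ‖z‖ := by
    intro z
    rcases eq_or_ne z 0 with rfl | hz
    · simp [hf, Set.indicator_apply, hR, Real.zero_rpow hne]
    · have hzn : 0 < ‖z‖ := norm_pos_iff.mpr hz
      by_cases hzR : ‖z‖ < R
      · rw [Set.indicator_of_mem (mem_ball_zero_iff.mpr hzR),
          hf, Set.indicator_of_mem (by exact ⟨hzn, hzR⟩)]
      · rw [Set.indicator_of_notMem (fun h => hzR (mem_ball_zero_iff.mp h)),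
          hf, Set.indicator_of_notMem (fun h => hzR h.2)]
  rw [← integral_indicator measurableSet_ball]
  calc ∫ z : EuclideanSpace ℝ (Fin N),
        (Metric.ball (0:EuclideanSpace ℝ (Fin N)) R).indicator (fun z => ‖z‖ ^ (1 - (N:ℝ))) z
      = ∫ z : EuclideanSpace ℝ (Fin N), f ‖z‖ := by
        exact integral_congr_ae (ae_of_all _ h1)
    _ = Module.finrank ℝ (EuclideanSpace ℝ (Fin N)) •
          (volume (Metric.ball (0:EuclideanSpace ℝ (Fin N)) 1)).toReal •
          ∫ y in Ioi (0:ℝ), y ^ (Module.finrank ℝ (EuclideanSpace ℝ (Fin N)) - 1) • f y :=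
        integral_fun_norm_addHaar volume f
    _ = (N:ℝ) * (volume (Metric.ball (0:EuclideanSpace ℝ (Fin N)) 1)).toReal * R := by
        rw [hfin]
        have h2 : ∀ y ∈ Ioi (0:ℝ), y ^ (N - 1) • f y =
            (Set.Ioo 0 R).indicator (fun _ => (1:ℝ)) y := by
          intro y hy
          rw [hf]
          by_cases hyR : y ∈ Set.Ioo (0:ℝ) R
          · rw [Set.indicator_of_mem hyR, Set.indicator_of_mem hyR, smul_eq_mul,
              ← Real.rpow_natCast y (N - 1), Nat.cast_sub (by omega), Nat.cast_one,
              ← Real.rpow_add hyR.1]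
            norm_num
          · rw [Set.indicator_of_notMem hyR, Set.indicator_of_notMem hyR, smul_zero]
        rw [setIntegral_congr_fun measurableSet_Ioi h2,
          setIntegral_indicator measurableSet_Ioo,
          Set.inter_eq_self_of_subset_right Set.Ioo_subset_Ioi_self,
          setIntegral_const, measureReal_def, Real.volume_Ioo,
          ENNReal.toReal_ofReal (by linarith), sub_zero, nsmul_eq_mul]
        simp [smul_eq_mul]; ring

lemma aux_g_le (N : ℕ) (hN : 3 ≤ N) (y : EuclideanSpace ℝ (Fin N)) :
    min 1 (‖y‖ ^ (1 - (N:ℝ))) ≤ (2:ℝ) ^ ((N:ℝ) - 1) * (1 + ‖y‖) ^ (1 - (N:ℝ)) := by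
  have hn3 : (3:ℝ) ≤ (N:ℝ) := by exact_mod_cast hN
  have h1y : (0:ℝ) < 1 + ‖y‖ := by positivity
  by_cases hy : ‖y‖ ≤ 1
  · have h2 : (2:ℝ) ^ (1 - (N:ℝ)) ≤ (1 + ‖y‖) ^ (1 - (N:ℝ)) :=
      rpow_le_rpow_of_nonpos h1y (by linarith) (by linarith)
    calc min 1 (‖y‖ ^ (1 - (N:ℝ))) ≤ 1 := min_le_left _ _
      _ = (2:ℝ) ^ ((N:ℝ) - 1) * (2:ℝ) ^ (1 - (N:ℝ)) := by
          rw [← Real.rpow_add two_pos]; norm_num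
      _ ≤ _ := by gcongr
  · push_neg at hy
    have h2 : ((2:ℝ) * ‖y‖) ^ (1 - (N:ℝ)) ≤ (1 + ‖y‖) ^ (1 - (N:ℝ)) :=
      rpow_le_rpow_of_nonpos h1y (by linarith) (by linarith)
    calc min 1 (‖y‖ ^ (1 - (N:ℝ))) ≤ ‖y‖ ^ (1 - (N:ℝ)) := min_le_right _ _
      _ = (2:ℝ) ^ ((N:ℝ) - 1) * (((2:ℝ)) ^ (1 - (N:ℝ)) * ‖y‖ ^ (1 - (N:ℝ))) := by
          rw [← mul_assoc, ← Real.rpow_add two_pos]; norm_num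
      _ = (2:ℝ) ^ ((N:ℝ) - 1) * ((2:ℝ) * ‖y‖) ^ (1 - (N:ℝ)) := by
          rw [Real.mul_rpow (by norm_num) (norm_nonneg y)]
      _ ≤ _ := by gcongr

lemma aux_g_sq_integrable (N : ℕ) (hN : 3 ≤ N) :
    Integrable (fun y : EuclideanSpace ℝ (Fin N) => (min 1 (‖y‖ ^ (1 - (N:ℝ)))) ^ 2) := by
  have hfin : Module.finrank ℝ (EuclideanSpace ℝ (Fin N)) = N := by simp [finrank_euclideanSpace]
  have hn3 : (3:ℝ) ≤ (N:ℝ) := by exact_mod_cast hN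
  have hint : Integrable
      (fun y : EuclideanSpace ℝ (Fin N) => (1 + ‖y‖) ^ (-(2 * (N:ℝ) - 2))) volume :=
    integrable_one_add_norm (by rw [hfin]; linarith)
  refine ((hint.const_mul (((2:ℝ) ^ ((N:ℝ) - 1)) ^ 2)).mono' ?_ ?_)
  · apply Measurable.aestronglyMeasurable
    fun_prop
  · refine ae_of_all _ fun y => ?_
    have h1y : (0:ℝ) < 1 + ‖y‖ := by positivity
    have h0 : (0:ℝ) ≤ min 1 (‖y‖ ^ (1 - (N:ℝ))) :=
      le_min zero_le_one (rpow_nonneg (norm_nonneg _) _)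
    rw [Real.norm_eq_abs, abs_of_nonneg (by positivity)]
    calc (min 1 (‖y‖ ^ (1 - (N:ℝ)))) ^ 2
        ≤ ((2:ℝ) ^ ((N:ℝ) - 1) * (1 + ‖y‖) ^ (1 - (N:ℝ))) ^ 2 := by
          apply pow_le_pow_left₀ h0 (aux_g_le N hN y)
      _ = ((2:ℝ) ^ ((N:ℝ) - 1)) ^ 2 * (1 + ‖y‖) ^ (-(2 * (N:ℝ) - 2)) := by
          rw [mul_pow]
          congr 1
          rw [← Real.rpow_natCast ((1 + ‖y‖) ^ (1 - (N:ℝ))) 2, ← Real.rpow_mul h1y.le]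
          norm_num; ring_nf

/-- For `N ≥ 3`, `b > N`, with `g(y) = min(1, |y|^(1-N))`, there is
`C > 0` such that `∫ g(y)²/|x-y|^(N-1) dy ≤ C·|x|^(1-N)` for all `|x| > 1`. -/
theorem stmt5 (N : ℕ) (hN : 3 ≤ N) (b : ℝ) (hb : (N : ℝ) < b) :
    ∃ C : ℝ, 0 < C ∧
      ∀ x : EuclideanSpace ℝ (Fin N), 1 < ‖x‖ →
        (∫ y : EuclideanSpace ℝ (Fin N),
            (min 1 (‖y‖ ^ (1 - (N : ℝ)))) ^ 2 / ‖x - y‖ ^ ((N : ℝ) - 1)) ≤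
          C * ‖x‖ ^ (1 - (N : ℝ)) := by
  classical
  have hn3 : (3:ℝ) ≤ (N:ℝ) := by exact_mod_cast hN
  set g : EuclideanSpace ℝ (Fin N) → ℝ := fun y => min 1 (‖y‖ ^ (1 - (N:ℝ))) with hg
  set K : ℝ := ∫ y : EuclideanSpace ℝ (Fin N), g y ^ 2 with hK
  set vB : ℝ := (volume (Metric.ball (0:EuclideanSpace ℝ (Fin N)) 1)).toReal with hvB
  have hK0 : 0 ≤ K := integral_nonneg fun y => sq_nonneg _
  have hvB0 : 0 ≤ vB := ENNReal.toReal_nonneg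
  set C : ℝ := K * 2 ^ ((N:ℝ) - 1) + (N:ℝ) * vB * 2 ^ (2 * (N:ℝ) - 3) + 1 with hC
  have hC0 : 0 < C := by
    have h1 : 0 ≤ K * 2 ^ ((N:ℝ) - 1) := mul_nonneg hK0 (rpow_nonneg (by norm_num) _)
    have h2 : 0 ≤ (N:ℝ) * vB * 2 ^ (2 * (N:ℝ) - 3) :=
      mul_nonneg (mul_nonneg (by positivity) hvB0) (rpow_nonneg (by norm_num) _)
    linarith
  refine ⟨C, hC0, fun x hx => ?_⟩
  set u : ℝ := ‖x‖ with hu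
  have hu1 : (1:ℝ) < u := hx
  set R : ℝ := u / 2 with hR
  have hR0 : 0 < R := by rw [hR]; linarith
  have hflip : ∀ a : ℝ, 0 ≤ a → ∀ c : ℝ, c / a ^ ((N:ℝ) - 1) = c * a ^ (1 - (N:ℝ)) := by
    intro a ha c
    rw [show (1 - (N:ℝ)) = -((N:ℝ) - 1) by ring, Real.rpow_neg ha, div_eq_mul_inv]
  set F : EuclideanSpace ℝ (Fin N) → ℝ :=
    fun y => g y ^ 2 / ‖x - y‖ ^ ((N:ℝ) - 1) with hF
  have hF0 : ∀ y, 0 ≤ F y := fun y => by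
    apply div_nonneg (sq_nonneg _) (rpow_nonneg (norm_nonneg _) _)
  have hFmeas : Measurable F := by fun_prop
  -- translation machinery
  set T : EuclideanSpace ℝ (Fin N) → EuclideanSpace ℝ (Fin N) := fun y => x - y with hT
  have hTmp : MeasurePreserving T volume volume := Measure.measurePreserving_sub_left volume x
  have hTemb : MeasurableEmbedding T := (MeasurableEquiv.subLeft x).measurableEmbedding
  have hpre : T ⁻¹' (Metric.ball 0 R) = Metric.ball x R := by
    ext y
    simp [hT, Metric.mem_ball, dist_eq_norm, norm_sub_rev]
  -- integrability on the ball
  have hkerint : IntegrableOn (fun y => ‖x - y‖ ^ (1 - (N:ℝ))) (Metric.ball x R) := by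
    have h := (hTmp.integrableOn_comp_preimage hTemb
      (f := fun z : EuclideanSpace ℝ (Fin N) => ‖z‖ ^ (1 - (N:ℝ)))
      (s := Metric.ball 0 R)).mpr (aux_int_ball N hN hR0)
    rwa [hpre] at h
  have hkerval : ∫ y in Metric.ball x R, ‖x - y‖ ^ (1 - (N:ℝ)) = (N:ℝ) * vB * R := by
    have h := hTmp.setIntegral_preimage_emb hTemb
      (fun z : EuclideanSpace ℝ (Fin N) => ‖z‖ ^ (1 - (N:ℝ))) (Metric.ball 0 R)
    rw [hpre] at h
    rw [h, aux_ball_value N hN hR0]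
  -- bounds on the two regions
  have hbndB : ∀ y ∈ Metric.ball x R, F y ≤ (R ^ (1 - (N:ℝ))) ^ 2 * ‖x - y‖ ^ (1 - (N:ℝ)) := by
    intro y hy
    have hxy : ‖x - y‖ < R := by
      rw [Metric.mem_ball, dist_eq_norm] at hy
      rwa [norm_sub_rev]
    have hyR : R ≤ ‖y‖ := by
      have h1 : u ≤ ‖x - y‖ + ‖y‖ := by
        calc u = ‖(x - y) + y‖ := by rw [hu]; congr 1; abel
          _ ≤ ‖x - y‖ + ‖y‖ := norm_add_le _ _
      have : u = 2 * R := by rw [hR]; ring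
      linarith
    have hgy : g y ≤ R ^ (1 - (N:ℝ)) := by
      refine le_trans (min_le_right _ _) ?_
      exact rpow_le_rpow_of_nonpos hR0 hyR (by linarith)
    have hgy2 : g y ^ 2 ≤ (R ^ (1 - (N:ℝ))) ^ 2 :=
      pow_le_pow_left₀ (le_min zero_le_one (rpow_nonneg (norm_nonneg _) _)) hgy 2
    show g y ^ 2 / ‖x - y‖ ^ ((N:ℝ) - 1) ≤ _
    rw [hflip _ (norm_nonneg _)]
    exact mul_le_mul_of_nonneg_right hgy2 (rpow_nonneg (norm_nonneg _) _)
  have hbndA : ∀ y ∈ (Metric.ball x R)ᶜ, F y ≤ g y ^ 2 * R ^ (1 - (N:ℝ)) := by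
    intro y hy
    have hxy : R ≤ ‖x - y‖ := by
      rw [mem_compl_iff, Metric.mem_ball, not_lt, dist_eq_norm, norm_sub_rev] at hy
      exact hy
    show g y ^ 2 / ‖x - y‖ ^ ((N:ℝ) - 1) ≤ _
    rw [← hflip _ hR0.le]
    exact div_le_div_of_nonneg_left (sq_nonneg _) (rpow_pos_of_pos hR0 _)
      (rpow_le_rpow hR0.le hxy (by linarith))
  -- integrability of F on each region
  have hgsq := aux_g_sq_integrable N hN
  have hA_dom : Integrable (fun y : EuclideanSpace ℝ (Fin N) => g y ^ 2 * R ^ (1 - (N:ℝ))) :=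
    hgsq.mul_const _
  have hB_dom : IntegrableOn
      (fun y => (R ^ (1 - (N:ℝ))) ^ 2 * ‖x - y‖ ^ (1 - (N:ℝ))) (Metric.ball x R) :=
    hkerint.const_mul _
  have hFA : IntegrableOn F (Metric.ball x R)ᶜ := by
    refine (hA_dom.integrableOn).mono' hFmeas.aestronglyMeasurable.restrict ?_
    refine (ae_restrict_iff' measurableSet_ball.compl).2 (ae_of_all _ fun y hy => ?_)
    rw [Real.norm_eq_abs, abs_of_nonneg (hF0 y)]
    exact hbndA y hy
  have hFB : IntegrableOn F (Metric.ball x R) := by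
    refine hB_dom.mono' hFmeas.aestronglyMeasurable.restrict ?_
    refine (ae_restrict_iff' measurableSet_ball).2 (ae_of_all _ fun y hy => ?_)
    rw [Real.norm_eq_abs, abs_of_nonneg (hF0 y)]
    exact hbndB y hy
  have hFint : Integrable F := by
    rw [← integrableOn_univ, ← Set.union_compl_self (Metric.ball x R)]
    exact hFB.union hFA
  -- split and estimate
  have hsplit : ∫ y, F y = (∫ y in Metric.ball x R, F y) + ∫ y in (Metric.ball x R)ᶜ, F y :=
    (integral_add_compl measurableSet_ball hFint).symm
  have hBint : ∫ y in Metric.ball x R, F y ≤ (R ^ (1 - (N:ℝ))) ^ 2 * ((N:ℝ) * vB * R) := by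
    calc ∫ y in Metric.ball x R, F y
        ≤ ∫ y in Metric.ball x R, (R ^ (1 - (N:ℝ))) ^ 2 * ‖x - y‖ ^ (1 - (N:ℝ)) :=
          setIntegral_mono_on hFB hB_dom measurableSet_ball hbndB
      _ = (R ^ (1 - (N:ℝ))) ^ 2 * ∫ y in Metric.ball x R, ‖x - y‖ ^ (1 - (N:ℝ)) :=
          integral_const_mul _ _
      _ = _ := by rw [hkerval]
  have hAint : ∫ y in (Metric.ball x R)ᶜ, F y ≤ K * R ^ (1 - (N:ℝ)) := by
    calc ∫ y in (Metric.ball x R)ᶜ, F y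
        ≤ ∫ y in (Metric.ball x R)ᶜ, g y ^ 2 * R ^ (1 - (N:ℝ)) :=
          setIntegral_mono_on hFA hA_dom.integrableOn measurableSet_ball.compl hbndA
      _ ≤ ∫ y, g y ^ 2 * R ^ (1 - (N:ℝ)) :=
          setIntegral_le_integral hA_dom (ae_of_all _ fun y =>
            mul_nonneg (sq_nonneg _) (rpow_nonneg hR0.le _))
      _ = K * R ^ (1 - (N:ℝ)) := by rw [hK, ← integral_mul_const]
  -- final arithmetic
  have hu0 : (0:ℝ) < u := by linarith
  have hRpow : R ^ (1 - (N:ℝ)) = u ^ (1 - (N:ℝ)) * 2 ^ ((N:ℝ) - 1) := by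
    rw [hR, Real.div_rpow hu0.le (by norm_num : (0:ℝ) ≤ 2),
      div_eq_mul_inv, ← Real.rpow_neg (by norm_num : (0:ℝ) ≤ 2)]
    ring_nf
  have hterm1 : (R ^ (1 - (N:ℝ))) ^ 2 * ((N:ℝ) * vB * R)
      ≤ (N:ℝ) * vB * 2 ^ (2 * (N:ℝ) - 3) * u ^ (1 - (N:ℝ)) := by
    have h1 : (R ^ (1 - (N:ℝ))) ^ 2 * R = R ^ (3 - 2 * (N:ℝ)) := by
      rw [← Real.rpow_natCast (R ^ (1 - (N:ℝ))) 2, ← Real.rpow_mul hR0.le,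
        ← Real.rpow_add_one hR0.ne']
      congr 1; push_cast; ring
    have h2 : R ^ (3 - 2 * (N:ℝ)) = u ^ (3 - 2 * (N:ℝ)) * 2 ^ (2 * (N:ℝ) - 3) := by
      rw [hR, Real.div_rpow hu0.le (by norm_num : (0:ℝ) ≤ 2),
        div_eq_mul_inv, ← Real.rpow_neg (by norm_num : (0:ℝ) ≤ 2)]
      ring_nf
    have h3 : u ^ (3 - 2 * (N:ℝ)) ≤ u ^ (1 - (N:ℝ)) :=
      Real.rpow_le_rpow_of_exponent_le hu1.le (by linarith)
    calc (R ^ (1 - (N:ℝ))) ^ 2 * ((N:ℝ) * vB * R)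
        = (N:ℝ) * vB * ((R ^ (1 - (N:ℝ))) ^ 2 * R) := by ring
      _ = (N:ℝ) * vB * (u ^ (3 - 2 * (N:ℝ)) * 2 ^ (2 * (N:ℝ) - 3)) := by rw [h1, h2]
      _ ≤ (N:ℝ) * vB * (u ^ (1 - (N:ℝ)) * 2 ^ (2 * (N:ℝ) - 3)) := by
          apply mul_le_mul_of_nonneg_left _ (mul_nonneg (by positivity) hvB0)
          exact mul_le_mul_of_nonneg_right h3 (rpow_nonneg (by norm_num) _)
      _ = (N:ℝ) * vB * 2 ^ (2 * (N:ℝ) - 3) * u ^ (1 - (N:ℝ)) := by ring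
  have hupow : (0:ℝ) < u ^ (1 - (N:ℝ)) := rpow_pos_of_pos hu0 _
  calc (∫ y : EuclideanSpace ℝ (Fin N),
          (min 1 (‖y‖ ^ (1 - (N:ℝ)))) ^ 2 / ‖x - y‖ ^ ((N:ℝ) - 1))
      = ∫ y, F y := rfl
    _ = (∫ y in Metric.ball x R, F y) + ∫ y in (Metric.ball x R)ᶜ, F y := hsplit
    _ ≤ (N:ℝ) * vB * 2 ^ (2 * (N:ℝ) - 3) * u ^ (1 - (N:ℝ))
        + K * (u ^ (1 - (N:ℝ)) * 2 ^ ((N:ℝ) - 1)) := by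
        refine add_le_add (le_trans hBint hterm1) ?_
        rw [← hRpow]; exact hAint
    _ ≤ C * u ^ (1 - (N:ℝ)) := by
        rw [hC]
        nlinarith [hupow, mul_nonneg hK0 (rpow_nonneg (by norm_num : (0:ℝ) ≤ 2) ((N:ℝ) - 1)),
          mul_nonneg (mul_nonneg (by positivity : (0:ℝ) ≤ (N:ℝ)) hvB0)
            (rpow_nonneg (by norm_num : (0:ℝ) ≤ 2) (2 * (N:ℝ) - 3))]
end
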